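/- arXiv:1709.06848 — 4 statements merged into one kernel-verified Lean document; each statement's English description precedes it below -/
import Mathlib

section
/- If a random vector X in R^n (n ≥ 2) satisfies E|X|^2 = n, then Var(|X|) ≤ σ_4^2, and moreover (1/4) σ_2^2 ≤ Var(|X|) ≤ σ_2 √n. -/
open MeasureTheory ProbabilityTheory Real
open scoped RealInnerProductSpace NNReal ENNReal ProbabilityTheory

/-- The Kolmogorov distance `ρ(U,V) = sup_x |U x - V x|` between two
(distribution) functions on the real line. -/
noncomputable def kolDist (U V : ℝ → ℝ) : ℝ := ⨆ x : ℝ, |U x - V x|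

/-- The standard normal distribution function `Φ`. -/
noncomputable def stdNormalCDF (x : ℝ) : ℝ :=
  ∫ y in Set.Iic x, Real.exp (-(y ^ 2) / 2) / Real.sqrt (2 * Real.pi)

/-- `μ` is the uniform (i.e. rotation-invariant) probability measure on the unit
sphere `S^{n-1}`, viewed as a measure on the ambient Euclidean space which is
supported on the sphere. -/
def IsUniformOnSphere {n : ℕ} (μ : Measure (EuclideanSpace ℝ (Fin n))) : Prop :=
  IsProbabilityMeasure μ ∧ μ (Metric.sphere 0 1) = 1 ∧
    ∀ T : EuclideanSpace ℝ (Fin n) ≃ₗᵢ[ℝ] EuclideanSpace ℝ (Fin n), μ.map T = μ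

/-- The distribution function `F_θ` of the weighted sum `S_θ = ⟨X, θ⟩`. -/
noncomputable def weightedCDF {n : ℕ} {Ω : Type} [MeasureSpace Ω]
    (X : Ω → EuclideanSpace ℝ (Fin n)) (θ : EuclideanSpace ℝ (Fin n)) (x : ℝ) : ℝ :=
  (ℙ {ω | ⟪X ω, θ⟫ ≤ x}).toReal

/-- The characteristic function `f_θ` of the weighted sum `S_θ = ⟨X, θ⟩`. -/
noncomputable def weightedCharFn {n : ℕ} {Ω : Type} [MeasureSpace Ω]
    (X : Ω → EuclideanSpace ℝ (Fin n)) (θ : EuclideanSpace ℝ (Fin n)) (t : ℝ) : ℂ :=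
  ∫ ω, Complex.exp (Complex.I * ((t * ⟪X ω, θ⟫ : ℝ) : ℂ))

/-- The typical distribution function `F = E_θ F_θ`. -/
noncomputable def typicalCDF {n : ℕ} {Ω : Type} [MeasureSpace Ω]
    (X : Ω → EuclideanSpace ℝ (Fin n)) (μ : Measure (EuclideanSpace ℝ (Fin n)))
    (x : ℝ) : ℝ :=
  ∫ θ, weightedCDF X θ x ∂μ

/-- The characteristic function `f = E_θ f_θ` of the typical distribution. -/
noncomputable def typicalCharFn {n : ℕ} {Ω : Type} [MeasureSpace Ω]
    (X : Ω → EuclideanSpace ℝ (Fin n)) (μ : Measure (EuclideanSpace ℝ (Fin n)))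
    (t : ℝ) : ℂ :=
  ∫ θ, weightedCharFn X θ t ∂μ

set_option maxHeartbeats 2000000 in
theorem stmt6 (n : ℕ) (hn : 2 ≤ n)
    (Ω : Type) [MeasureSpace Ω] [IsProbabilityMeasure (ℙ : Measure Ω)]
    (X : Ω → EuclideanSpace ℝ (Fin n)) (hX : Measurable X)
    (hnorm : (∫ ω, ‖X ω‖ ^ 2) = (n : ℝ)) :
    ((Integrable fun ω => ‖X ω‖ ^ 4) →
      variance (fun ω => ‖X ω‖) ℙ ≤ (n : ℝ)⁻¹ * variance (fun ω => ‖X ω‖ ^ 2) ℙ) ∧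
    (1 / 4) * ((Real.sqrt n)⁻¹ * ∫ ω, |‖X ω‖ ^ 2 - (n : ℝ)|) ^ 2 ≤
      variance (fun ω => ‖X ω‖) ℙ ∧
    variance (fun ω => ‖X ω‖) ℙ ≤
      ((Real.sqrt n)⁻¹ * ∫ ω, |‖X ω‖ ^ 2 - (n : ℝ)|) * Real.sqrt n := by
  set r : Ω → ℝ := fun ω => ‖X ω‖ with hrdef
  have hrm : Measurable r := hX.norm
  have hr0 : ∀ ω, 0 ≤ r ω := fun ω => norm_nonneg _
  have hn0 : (0:ℝ) < n := by positivity
  have hint2 : Integrable (fun ω => r ω ^ 2) := by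
    by_contra h
    rw [integral_undef h] at hnorm
    exact hn0.ne' hnorm.symm
  have hL2 : MemLp r 2 ℙ :=
    (memLp_two_iff_integrable_sq hrm.aestronglyMeasurable).2 hint2
  have hint1 : Integrable r := hL2.integrable one_le_two
  set s : ℝ := Real.sqrt n with hsdef
  have hs0 : 0 < s := Real.sqrt_pos.2 hn0
  have hs2 : s ^ 2 = n := Real.sq_sqrt hn0.le
  set a : ℝ := ∫ ω, r ω with hadef
  have ha0 : 0 ≤ a := integral_nonneg hr0
  have hVar : variance r ℙ = n - a ^ 2 := by
    rw [variance_eq_sub hL2]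
    simp only [Pi.pow_apply]
    rw [hnorm]
  have hVnn : 0 ≤ variance r ℙ := variance_nonneg _ _
  have ha2 : a ^ 2 ≤ n := by nlinarith [hVar, hVnn]
  -- integral computations
  have hIplus : (∫ ω, (r ω + s) ^ 2) = 2 * n + 2 * s * a := by
    have he : (fun ω => (r ω + s) ^ 2)
        = fun ω => r ω ^ 2 + ((2 * s) * r ω + s ^ 2) := by
      funext ω; ring
    have i1 : Integrable (fun ω => (2 * s) * r ω + s ^ 2) ℙ :=
      (hint1.const_mul _).add (integrable_const _)
    have i2 : Integrable (fun ω => (2 * s) * r ω) ℙ := hint1.const_mul _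
    rw [he, integral_add hint2 i1, integral_add i2 (integrable_const _),
      integral_const_mul, hnorm, integral_const]
    simp [hs2]
    ring
  have hIminus : (∫ ω, (r ω - s) ^ 2) = 2 * n - 2 * s * a := by
    have he : (fun ω => (r ω - s) ^ 2)
        = fun ω => r ω ^ 2 + ((-(2 * s)) * r ω + s ^ 2) := by
      funext ω; ring
    have i1 : Integrable (fun ω => (-(2 * s)) * r ω + s ^ 2) ℙ :=
      (hint1.const_mul _).add (integrable_const _)
    have i2 : Integrable (fun ω => (-(2 * s)) * r ω) ℙ := hint1.const_mul _
    rw [he, integral_add hint2 i1, integral_add i2 (integrable_const _),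
      integral_const_mul, hnorm, integral_const]
    simp [hs2]
    ring
  have hintminus : Integrable (fun ω => (r ω - s) ^ 2) := by
    have he : (fun ω => (r ω - s) ^ 2)
        = fun ω => r ω ^ 2 + ((-(2 * s)) * r ω + s ^ 2) := by
      funext ω; ring
    rw [he]; exact hint2.add ((hint1.const_mul _).add (integrable_const _))
  have hintabs : Integrable (fun ω => |r ω ^ 2 - (n:ℝ)|) :=
    (hint2.sub (integrable_const _)).abs
  set I : ℝ := ∫ ω, |r ω ^ 2 - (n:ℝ)| with hIdef
  have hI0 : 0 ≤ I := integral_nonneg fun ω => abs_nonneg _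
  -- pointwise : (r - s)^2 ≤ |r^2 - n|
  have hpt : ∀ ω, (r ω - s) ^ 2 ≤ |r ω ^ 2 - (n:ℝ)| := by
    intro ω
    have h1 : r ω ^ 2 - (n:ℝ) = (r ω - s) * (r ω + s) := by
      rw [← hs2]; ring
    rw [h1, abs_mul, abs_of_nonneg (by nlinarith [hr0 ω, hs0.le] : (0:ℝ) ≤ r ω + s)]
    have h2 : |r ω - s| ≤ r ω + s := by
      rw [abs_sub_le_iff]; constructor <;> nlinarith [hr0 ω, hs0.le]
    calc (r ω - s) ^ 2 = |r ω - s| * |r ω - s| := by rw [abs_mul_abs_self]; ring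
      _ ≤ |r ω - s| * (r ω + s) := by
          exact mul_le_mul_of_nonneg_left h2 (abs_nonneg _)
  have hkey : (∫ ω, (r ω - s) ^ 2) ≤ I :=
    integral_mono hintminus hintabs hpt
  -- variance ≤ ∫ (r - s)^2
  have hVle : variance r ℙ ≤ ∫ ω, (r ω - s) ^ 2 := by
    rw [hVar, hIminus]; nlinarith [sq_nonneg (s - a)]
  clear_value s a I
  refine ⟨?_, ?_, ?_⟩
  · -- first inequality
    intro h4
    have h4' : Integrable (fun ω => r ω ^ 4) := h4
    have hL2sq : MemLp (fun ω => r ω ^ 2) 2 ℙ := by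
      refine (memLp_two_iff_integrable_sq
        (hrm.pow_const 2).aestronglyMeasurable).2 ?_
      have : (fun ω => (r ω ^ 2) ^ 2) = fun ω => r ω ^ 4 := by funext ω; ring
      rw [this]; exact h4'
    have hVar2 : variance (fun ω => r ω ^ 2) ℙ = (∫ ω, r ω ^ 4) - (n:ℝ) ^ 2 := by
      rw [variance_eq_sub hL2sq]
      simp only [Pi.pow_apply]
      have : (fun ω => (r ω ^ 2) ^ 2) = fun ω => r ω ^ 4 := by funext ω; ring
      rw [this, hnorm]
    have hsqint : (∫ ω, (r ω ^ 2 - (n:ℝ)) ^ 2) = (∫ ω, r ω ^ 4) - (n:ℝ) ^ 2 := by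
      have he : (fun ω => (r ω ^ 2 - (n:ℝ)) ^ 2)
          = fun ω => r ω ^ 4 + ((-(2 * (n:ℝ))) * r ω ^ 2 + (n:ℝ) ^ 2) := by
        funext ω; ring
      have i1 : Integrable (fun ω => (-(2 * (n:ℝ))) * r ω ^ 2 + (n:ℝ) ^ 2) ℙ :=
        (hint2.const_mul _).add (integrable_const _)
      have i2 : Integrable (fun ω => (-(2 * (n:ℝ))) * r ω ^ 2) ℙ := hint2.const_mul _
      rw [he, integral_add h4' i1, integral_add i2 (integrable_const _),
        integral_const_mul, hnorm, integral_const]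
      simp
      ring
    have hptn : ∀ ω, (n:ℝ) * (r ω - s) ^ 2 ≤ (r ω ^ 2 - (n:ℝ)) ^ 2 := by
      intro ω
      have h1 : r ω ^ 2 - (n:ℝ) = (r ω - s) * (r ω + s) := by rw [← hs2]; ring
      have h2 : (n:ℝ) ≤ (r ω + s) ^ 2 := by nlinarith [hr0 ω, hs0.le, hs2]
      calc (n:ℝ) * (r ω - s) ^ 2 ≤ (r ω + s) ^ 2 * (r ω - s) ^ 2 :=
            mul_le_mul_of_nonneg_right h2 (sq_nonneg _)
        _ = (r ω ^ 2 - (n:ℝ)) ^ 2 := by rw [h1]; ring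
    have hintsq : Integrable (fun ω => (r ω ^ 2 - (n:ℝ)) ^ 2) := by
      have he : (fun ω => (r ω ^ 2 - (n:ℝ)) ^ 2)
          = fun ω => r ω ^ 4 + ((-(2 * (n:ℝ))) * r ω ^ 2 + (n:ℝ) ^ 2) := by
        funext ω; ring
      rw [he]; exact h4'.add ((hint2.const_mul _).add (integrable_const _))
    have hnV : (n:ℝ) * (∫ ω, (r ω - s) ^ 2) ≤ ∫ ω, (r ω ^ 2 - (n:ℝ)) ^ 2 := by
      rw [← integral_const_mul]
      exact integral_mono (hintminus.const_mul _) hintsq hptn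
    rw [hVar2, ← hsqint]
    have h6 : (∫ ω, (r ω - s) ^ 2) ≤ (∫ ω, (r ω ^ 2 - (n:ℝ)) ^ 2) / (n:ℝ) :=
      (le_div_iff₀ hn0).2
        (by linarith [hnV, mul_comm ((n:ℝ)) (∫ ω, (r ω - s) ^ 2)])
    have h5 := hVle.trans h6
    rwa [div_eq_inv_mul] at h5
  · -- lower bound via Cauchy-Schwarz
    have hconj : Real.HolderConjugate 2 2 := Real.HolderConjugate.two_two
    have hMp : MemLp (fun ω => r ω + s) (ENNReal.ofReal 2) ℙ := by
      have : ENNReal.ofReal 2 = 2 := by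
        rw [ENNReal.ofReal_ofNat]
      rw [this]
      exact hL2.add (memLp_const s)
    have hMm : MemLp (fun ω => |r ω - s|) (ENNReal.ofReal 2) ℙ := by
      have h2 : ENNReal.ofReal 2 = 2 := by rw [ENNReal.ofReal_ofNat]
      rw [h2]
      have := (hL2.sub (memLp_const s)).norm
      simpa [Real.norm_eq_abs] using this
    have hCS := integral_mul_le_Lp_mul_Lq_of_nonneg hconj
      (Filter.Eventually.of_forall fun ω => by positivity : 0 ≤ᵐ[ℙ] fun ω => r ω + s)
      (Filter.Eventually.of_forall fun ω => abs_nonneg _ : 0 ≤ᵐ[ℙ] fun ω => |r ω - s|)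
      hMp hMm
    have heq1 : (∫ ω, (r ω + s) * |r ω - s|) = I := by
      rw [hIdef]
      refine integral_congr_ae (Filter.Eventually.of_forall fun ω => ?_)
      show (r ω + s) * |r ω - s| = |r ω ^ 2 - (n:ℝ)|
      have h1 : r ω ^ 2 - (n:ℝ) = (r ω - s) * (r ω + s) := by rw [← hs2]; ring
      rw [h1, abs_mul, abs_of_nonneg (by nlinarith [hr0 ω, hs0.le] : (0:ℝ) ≤ r ω + s)]
      ring
    have heq2 : (∫ ω, (r ω + s) ^ (2:ℝ)) = 2 * n + 2 * s * a := by
      rw [← hIplus]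
      refine integral_congr_ae (Filter.Eventually.of_forall fun ω => ?_)
      show (r ω + s) ^ (2:ℝ) = (r ω + s) ^ (2:ℕ)
      rw [← Real.rpow_natCast (r ω + s) 2]; norm_num
    have heq3 : (∫ ω, |r ω - s| ^ (2:ℝ)) = 2 * n - 2 * s * a := by
      rw [← hIminus]
      refine integral_congr_ae (Filter.Eventually.of_forall fun ω => ?_)
      show |r ω - s| ^ (2:ℝ) = (r ω - s) ^ (2:ℕ)
      rw [← sq_abs, ← Real.rpow_natCast |r ω - s| 2]; norm_num
    rw [heq1, heq2, heq3] at hCS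
    have hA : (0:ℝ) ≤ 2 * n + 2 * s * a := by positivity
    have hB : (0:ℝ) ≤ 2 * n - 2 * s * a := by
      rw [← hIminus]; exact integral_nonneg fun ω => sq_nonneg _
    have hCS2 : I ^ 2 ≤ (2 * n + 2 * s * a) * (2 * n - 2 * s * a) := by
      have h1 : (2 * n + 2 * s * a) ^ (1/2 : ℝ) = Real.sqrt (2 * n + 2 * s * a) :=
        (Real.sqrt_eq_rpow _).symm
      have h2 : (2 * n - 2 * s * a) ^ (1/2 : ℝ) = Real.sqrt (2 * n - 2 * s * a) :=
        (Real.sqrt_eq_rpow _).symm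
      rw [h1, h2] at hCS
      calc I ^ 2 ≤ (Real.sqrt (2 * n + 2 * s * a) * Real.sqrt (2 * n - 2 * s * a)) ^ 2 := by
            apply pow_le_pow_left₀ hI0 hCS
        _ = (2 * n + 2 * s * a) * (2 * n - 2 * s * a) := by
            rw [mul_pow, Real.sq_sqrt hA, Real.sq_sqrt hB]
    have hprod : (2 * n + 2 * s * a) * (2 * n - 2 * s * a)
        = 4 * n * (n - a ^ 2) := by rw [← hs2]; ring
    have hIsq : (s⁻¹ * I) ^ 2 = I ^ 2 / n := by
      rw [mul_pow, inv_pow, hs2]; ring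
    have h4V : I ^ 2 ≤ 4 * n * (n - a ^ 2) := hprod ▸ hCS2
    have hdiv : I ^ 2 / n ≤ 4 * (n - a ^ 2) :=
      (div_le_iff₀ hn0).2 (by nlinarith [h4V])
    rw [hVar, hIsq]
    linarith [hdiv]
  · -- upper bound
    have : variance r ℙ ≤ I := hVle.trans hkey
    have hfinal : (s⁻¹ * I) * s = I := by field_simp
    rw [hfinal]
    exact this
end

section
/- Let Y be an independent copy of a random vector X in R^n (n ≥ 2) with E|X|^2 = n. For all p, q ≥ 1, P{ |X − Y|^2 ≤ n/4 } ≤ 4^q m_q^q / n^{q/2} + 4^{2p} σ_{2p}^{2p} / n^p. In particular, P{ |X − Y|^2 ≤ n/4 } ≤ C / n^p with C = 4^{2p} (m_{2p}^{2p} + σ_{2p}^{2p}). -/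
open MeasureTheory ProbabilityTheory Real
open scoped RealInnerProductSpace NNReal ENNReal ProbabilityTheory

open MeasureTheory ProbabilityTheory Real
open scoped RealInnerProductSpace NNReal ENNReal ProbabilityTheory

lemma myMarkov {Ω : Type} [MeasureSpace Ω] [IsProbabilityMeasure (ℙ : Measure Ω)]
    (g : Ω → ℝ) (r a : ℝ) (ha : 0 < a) (hr : 0 < r)
    (hint : Integrable (fun ω => |g ω| ^ r)) :
    (ℙ {ω | a ≤ |g ω|}).toReal ≤ (∫ ω, |g ω| ^ r) / a ^ r := by
  have key := mul_meas_ge_le_integral_of_nonneg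
    (μ := (ℙ : Measure Ω)) (f := fun ω => |g ω| ^ r)
    (Filter.Eventually.of_forall fun ω => Real.rpow_nonneg (abs_nonneg _) r) hint (a ^ r)
  have hsub : {ω | a ≤ |g ω|} ⊆ {ω | a ^ r ≤ |g ω| ^ r} :=
    fun ω h => Real.rpow_le_rpow ha.le h hr.le
  have hmono : (ℙ {ω | a ≤ |g ω|}).toReal ≤ (ℙ {ω | a ^ r ≤ |g ω| ^ r}).toReal :=
    ENNReal.toReal_mono (measure_ne_top _ _) (measure_mono hsub)
  have har : 0 < a ^ r := Real.rpow_pos_of_pos ha r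
  rw [le_div_iff₀ har]
  calc (ℙ {ω | a ≤ |g ω|}).toReal * a ^ r
      ≤ (ℙ {ω | a ^ r ≤ |g ω| ^ r}).toReal * a ^ r := by
        exact mul_le_mul_of_nonneg_right hmono har.le
    _ ≤ ∫ ω, |g ω| ^ r := by rw [mul_comm]; exact key

lemma alg1 (n E r : ℝ) (hn : 0 < n) (hE : 0 ≤ E) (hr : r ≠ 0) :
    (4 : ℝ) ^ r * ((Real.sqrt n)⁻¹ * E ^ r⁻¹) ^ r / n ^ (r / 2) =
      (4 : ℝ) ^ r * E / n ^ r := by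
  rw [Real.mul_rpow (by positivity) (Real.rpow_nonneg hE _), ← Real.rpow_mul hE,
    inv_mul_cancel₀ hr, Real.rpow_one, Real.inv_rpow (Real.sqrt_nonneg n),
    Real.sqrt_eq_rpow, ← Real.rpow_mul hn.le]
  have h2 : n ^ (r : ℝ) = n ^ (1 / 2 * r) * n ^ (1 / 2 * r) := by
    rw [← Real.rpow_add hn]; ring_nf
  rw [h2]
  have hpos : (0:ℝ) < n ^ (1 / 2 * r) := Real.rpow_pos_of_pos hn _
  have h3 : (r / 2 : ℝ) = 1 / 2 * r := by ring
  rw [h3]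
  field_simp

lemma alg2 (n E p : ℝ) (hn : 0 < n) (hE : 0 ≤ E) (hp : p ≠ 0) :
    (4 : ℝ) ^ (2 * p) * (Real.sqrt n * E ^ p⁻¹) ^ (2 * p) / n ^ p =
      ((4 : ℝ) ^ p * E) ^ 2 := by
  rw [Real.mul_rpow (Real.sqrt_nonneg n) (Real.rpow_nonneg hE _), ← Real.rpow_mul hE,
    Real.sqrt_eq_rpow, ← Real.rpow_mul hn.le]
  have h1 : (1 / 2 * (2 * p) : ℝ) = p := by ring
  have h2 : (p⁻¹ * (2 * p) : ℝ) = 2 := by field_simp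
  have h3 : (2 * p : ℝ) = p * 2 := by ring
  rw [h1, h2, h3, Real.rpow_mul (by norm_num : (0:ℝ) ≤ 4)]
  rw [Real.rpow_two, Real.rpow_two]
  have hpos : (0:ℝ) < n ^ p := Real.rpow_pos_of_pos hn _
  field_simp

lemma core (n : ℕ) (hn : 2 ≤ n)
    (Ω : Type) [MeasureSpace Ω] [IsProbabilityMeasure (ℙ : Measure Ω)]
    (X Y : Ω → EuclideanSpace ℝ (Fin n)) (hX : Measurable X) (hY : Measurable Y)
    (hindep : IndepFun X Y ℙ) (hid : Measure.map X ℙ = Measure.map Y ℙ)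
    (p r : ℝ) (hp : 1 ≤ p) (hr : 1 ≤ r)
    (hintr : Integrable fun ω => |⟪X ω, Y ω⟫| ^ r)
    (hintσ : Integrable fun ω => |‖X ω‖ ^ 2 / (n : ℝ) - 1| ^ p) :
    (ℙ {ω | ‖X ω - Y ω‖ ^ 2 ≤ (n : ℝ) / 4}).toReal ≤
      (4 : ℝ) ^ r * (∫ ω, |⟪X ω, Y ω⟫| ^ r) / (n : ℝ) ^ r +
        ((4 : ℝ) ^ p * (∫ ω, |‖X ω‖ ^ 2 / (n : ℝ) - 1| ^ p)) ^ 2 := by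
  have hn0 : (0:ℝ) < n := by positivity
  set a : ℝ := (n : ℝ) / 4 with ha_def
  have ha : 0 < a := by positivity
  set A : Set Ω := {ω | a ≤ |⟪X ω, Y ω⟫|} with hA_def
  set S : Set (EuclideanSpace ℝ (Fin n)) :=
    {v | (1/4 : ℝ) ≤ |‖v‖ ^ 2 / (n : ℝ) - 1|} with hS_def
  have hmS : Measurable fun v : EuclideanSpace ℝ (Fin n) => |‖v‖ ^ 2 / (n : ℝ) - 1| := by
    measurability
  have hS : MeasurableSet S := measurableSet_le measurable_const hmS
  set B : Set Ω := X ⁻¹' S with hB_def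
  set C : Set Ω := Y ⁻¹' S with hC_def
  -- event inclusion
  have hsub : {ω | ‖X ω - Y ω‖ ^ 2 ≤ (n : ℝ) / 4} ⊆ A ∪ (B ∩ C) := by
    intro ω hω
    by_contra hc
    simp only [Set.mem_union, Set.mem_inter_iff, hA_def, hB_def, hC_def, hS_def,
      Set.mem_preimage, Set.mem_setOf_eq, not_or, not_and_or, not_le] at hc
    obtain ⟨h1, h2⟩ := hc
    have hω' : ‖X ω - Y ω‖ ^ 2 ≤ (n : ℝ) / 4 := hω
    have hexp := norm_sub_sq_real (X ω) (Y ω)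
    have hip := (abs_lt.mp h1).2
    have hYnn : (0:ℝ) ≤ ‖Y ω‖ ^ 2 := by positivity
    have hXnn : (0:ℝ) ≤ ‖X ω‖ ^ 2 := by positivity
    rcases h2 with h2 | h2
    · have hx := (abs_lt.mp h2).1
      have hXb : (3:ℝ)/4 * n < ‖X ω‖ ^ 2 := by
        have := (lt_div_iff₀ hn0).mp (by linarith : (3:ℝ)/4 < ‖X ω‖ ^ 2 / (n:ℝ))
        linarith [this]
      nlinarith
    · have hx := (abs_lt.mp h2).1
      have hYb : (3:ℝ)/4 * n < ‖Y ω‖ ^ 2 := by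
        have := (lt_div_iff₀ hn0).mp (by linarith : (3:ℝ)/4 < ‖Y ω‖ ^ 2 / (n:ℝ))
        linarith [this]
      nlinarith
  -- independence and identical distribution
  have hBC : ℙ (B ∩ C) = ℙ B * ℙ C :=
    hindep.measure_inter_preimage_eq_mul S S hS hS
  have hCB : ℙ C = ℙ B := by
    rw [hC_def, hB_def, ← Measure.map_apply hY hS, ← Measure.map_apply hX hS, hid]
  -- measure bound in ℝ≥0∞
  have h1 : ℙ {ω | ‖X ω - Y ω‖ ^ 2 ≤ (n : ℝ) / 4} ≤ ℙ A + ℙ B * ℙ B := by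
    calc ℙ {ω | ‖X ω - Y ω‖ ^ 2 ≤ (n : ℝ) / 4} ≤ ℙ (A ∪ (B ∩ C)) := measure_mono hsub
      _ ≤ ℙ A + ℙ (B ∩ C) := measure_union_le _ _
      _ = ℙ A + ℙ B * ℙ B := by rw [hBC, hCB]
  have h2 : (ℙ {ω | ‖X ω - Y ω‖ ^ 2 ≤ (n : ℝ) / 4}).toReal ≤
      (ℙ A).toReal + (ℙ B).toReal * (ℙ B).toReal := by
    have hne : ℙ A + ℙ B * ℙ B ≠ ⊤ :=
      ENNReal.add_ne_top.mpr ⟨measure_ne_top _ _,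
        ENNReal.mul_ne_top (measure_ne_top _ _) (measure_ne_top _ _)⟩
    calc (ℙ {ω | ‖X ω - Y ω‖ ^ 2 ≤ (n : ℝ) / 4}).toReal
        ≤ (ℙ A + ℙ B * ℙ B).toReal := ENNReal.toReal_mono hne h1
      _ = (ℙ A).toReal + (ℙ B).toReal * (ℙ B).toReal := by
          rw [ENNReal.toReal_add (measure_ne_top _ _)
            (ENNReal.mul_ne_top (measure_ne_top _ _) (measure_ne_top _ _)),
            ENNReal.toReal_mul]
  -- Markov bounds
  have hEq_nonneg : 0 ≤ ∫ ω, |⟪X ω, Y ω⟫| ^ r :=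
    integral_nonneg fun ω => Real.rpow_nonneg (abs_nonneg _) r
  have hEp_nonneg : 0 ≤ ∫ ω, |‖X ω‖ ^ 2 / (n : ℝ) - 1| ^ p :=
    integral_nonneg fun ω => Real.rpow_nonneg (abs_nonneg _) p
  have hmA : (ℙ A).toReal ≤ (4 : ℝ) ^ r * (∫ ω, |⟪X ω, Y ω⟫| ^ r) / (n : ℝ) ^ r := by
    have := myMarkov (fun ω => ⟪X ω, Y ω⟫) r a ha (by linarith) hintr
    rw [ha_def, Real.div_rpow hn0.le (by norm_num)] at this
    have h4 : (0:ℝ) < (4:ℝ) ^ r := Real.rpow_pos_of_pos (by norm_num) r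
    have hnr : (0:ℝ) < (n:ℝ) ^ r := Real.rpow_pos_of_pos hn0 r
    calc (ℙ A).toReal ≤ (∫ ω, |⟪X ω, Y ω⟫| ^ r) / ((n:ℝ) ^ r / 4 ^ r) := this
      _ = (4 : ℝ) ^ r * (∫ ω, |⟪X ω, Y ω⟫| ^ r) / (n : ℝ) ^ r := by
          field_simp
  have hmB : (ℙ B).toReal ≤ (4 : ℝ) ^ p * (∫ ω, |‖X ω‖ ^ 2 / (n : ℝ) - 1| ^ p) := by
    have := myMarkov (fun ω => ‖X ω‖ ^ 2 / (n : ℝ) - 1) p (1/4) (by norm_num)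
      (by linarith) hintσ
    have h14 : ((1:ℝ)/4) ^ p = ((4:ℝ) ^ p)⁻¹ := by
      rw [show (1:ℝ)/4 = (4:ℝ)⁻¹ by norm_num, Real.inv_rpow (by norm_num)]
    have hB_eq : B = {ω | (1/4 : ℝ) ≤ |‖X ω‖ ^ 2 / (n : ℝ) - 1|} := rfl
    rw [hB_eq]
    calc (ℙ {ω | (1/4 : ℝ) ≤ |‖X ω‖ ^ 2 / (n : ℝ) - 1|}).toReal
        ≤ (∫ ω, |‖X ω‖ ^ 2 / (n : ℝ) - 1| ^ p) / ((1:ℝ)/4) ^ p := this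
      _ = (4 : ℝ) ^ p * (∫ ω, |‖X ω‖ ^ 2 / (n : ℝ) - 1| ^ p) := by
          rw [h14, div_eq_mul_inv, inv_inv, mul_comm]
  refine h2.trans (add_le_add hmA ?_)
  have hBnn : 0 ≤ (ℙ B).toReal := ENNReal.toReal_nonneg
  calc (ℙ B).toReal * (ℙ B).toReal
      ≤ ((4 : ℝ) ^ p * (∫ ω, |‖X ω‖ ^ 2 / (n : ℝ) - 1| ^ p)) *
        ((4 : ℝ) ^ p * (∫ ω, |‖X ω‖ ^ 2 / (n : ℝ) - 1| ^ p)) :=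
        mul_le_mul hmB hmB hBnn (by positivity)
    _ = _ := by ring

theorem stmt7 (n : ℕ) (hn : 2 ≤ n)
    (Ω : Type) [MeasureSpace Ω] [IsProbabilityMeasure (ℙ : Measure Ω)]
    (X Y : Ω → EuclideanSpace ℝ (Fin n)) (hX : Measurable X) (hY : Measurable Y)
    (hindep : IndepFun X Y ℙ) (hid : Measure.map X ℙ = Measure.map Y ℙ)
    (hnorm : (∫ ω, ‖X ω‖ ^ 2) = (n : ℝ))
    (p q : ℝ) (hp : 1 ≤ p) (hq : 1 ≤ q)
    (hintq : Integrable fun ω => |⟪X ω, Y ω⟫| ^ q)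
    (hint2p : Integrable fun ω => |⟪X ω, Y ω⟫| ^ (2 * p))
    (hintσ : Integrable fun ω => |‖X ω‖ ^ 2 / (n : ℝ) - 1| ^ p) :
    (ℙ {ω | ‖X ω - Y ω‖ ^ 2 ≤ (n : ℝ) / 4}).toReal ≤
        (4 : ℝ) ^ q * ((Real.sqrt n)⁻¹ * (∫ ω, |⟪X ω, Y ω⟫| ^ q) ^ q⁻¹) ^ q /
            (n : ℝ) ^ (q / 2) +
          (4 : ℝ) ^ (2 * p) *
            (Real.sqrt n * (∫ ω, |‖X ω‖ ^ 2 / (n : ℝ) - 1| ^ p) ^ p⁻¹) ^ (2 * p) /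
            (n : ℝ) ^ p ∧
    (ℙ {ω | ‖X ω - Y ω‖ ^ 2 ≤ (n : ℝ) / 4}).toReal ≤
        (4 : ℝ) ^ (2 * p) *
          (((Real.sqrt n)⁻¹ * (∫ ω, |⟪X ω, Y ω⟫| ^ (2 * p)) ^ (2 * p)⁻¹) ^ (2 * p) +
            (Real.sqrt n * (∫ ω, |‖X ω‖ ^ 2 / (n : ℝ) - 1| ^ p) ^ p⁻¹) ^ (2 * p)) /
          (n : ℝ) ^ p := by
  have hn0 : (0:ℝ) < n := by positivity
  have hp0 : p ≠ 0 := by linarith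
  have hq0 : q ≠ 0 := by linarith
  have hEq : 0 ≤ ∫ ω, |⟪X ω, Y ω⟫| ^ q :=
    integral_nonneg fun ω => Real.rpow_nonneg (abs_nonneg _) q
  have hE2p : 0 ≤ ∫ ω, |⟪X ω, Y ω⟫| ^ (2 * p) :=
    integral_nonneg fun ω => Real.rpow_nonneg (abs_nonneg _) (2 * p)
  have hEp : 0 ≤ ∫ ω, |‖X ω‖ ^ 2 / (n : ℝ) - 1| ^ p :=
    integral_nonneg fun ω => Real.rpow_nonneg (abs_nonneg _) p
  constructor
  · have h := core n hn Ω X Y hX hY hindep hid p q hp hq hintq hintσ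
    rw [alg1 n _ q hn0 hEq hq0, alg2 n _ p hn0 hEp hp0]
    exact h
  · have h := core n hn Ω X Y hX hY hindep hid p (2 * p) hp (by linarith) hint2p hintσ
    have h1 := alg1 n (∫ ω, |⟪X ω, Y ω⟫| ^ (2 * p)) (2 * p) hn0 hE2p (by linarith)
    have hrw : ((2 * p) / 2 : ℝ) = p := by ring
    rw [hrw] at h1
    have h2 := alg2 n (∫ ω, |‖X ω‖ ^ 2 / (n : ℝ) - 1| ^ p) p hn0 hEp hp0
    have key : (4 : ℝ) ^ (2 * p) *
          (((Real.sqrt n)⁻¹ * (∫ ω, |⟪X ω, Y ω⟫| ^ (2 * p)) ^ (2 * p)⁻¹) ^ (2 * p) +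
            (Real.sqrt n * (∫ ω, |‖X ω‖ ^ 2 / (n : ℝ) - 1| ^ p) ^ p⁻¹) ^ (2 * p)) /
          (n : ℝ) ^ p =
        (4 : ℝ) ^ (2 * p) * (∫ ω, |⟪X ω, Y ω⟫| ^ (2 * p)) / (n : ℝ) ^ (2 * p) +
          ((4 : ℝ) ^ p * (∫ ω, |‖X ω‖ ^ 2 / (n : ℝ) - 1| ^ p)) ^ 2 := by
      rw [mul_add, add_div, h1, h2]
    rw [key]
    exact h
end

section
/- There is a universal constant C > 0 such that for every n ≥ 3 and all x ∈ R, |φ_n(x) − φ(x)| ≤ (C/n) e^{−x^2/8}, where φ_n is the probability density of Z_n = √n θ_1 with θ uniformly distributed on the unit sphere S^{n-1}, and φ(x) = (2π)^{-1/2} e^{−x^2/2} is the standard normal density. -/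
open MeasureTheory ProbabilityTheory Real
open scoped RealInnerProductSpace NNReal ENNReal ProbabilityTheory

section auxx

lemma aux_gamma_sq {p q : ℝ} (hp : 0 < p) (hq : 0 < q) :
    Real.Gamma ((p + q) / 2) ^ 2 ≤ Real.Gamma p * Real.Gamma q := by
  have hm : (0:ℝ) < (p + q) / 2 := by linarith
  have h := Real.convexOn_log_Gamma.2 (Set.mem_Ioi.mpr hp) (Set.mem_Ioi.mpr hq)
    (by norm_num : (0:ℝ) ≤ 1/2) (by norm_num : (0:ℝ) ≤ 1/2) (by norm_num)
  simp only [Function.comp_apply, smul_eq_mul] at h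
  have hmp : (1/2 : ℝ) * p + (1/2 : ℝ) * q = (p+q)/2 := by ring
  rw [hmp] at h
  have hGp := Real.Gamma_pos_of_pos hp
  have hGq := Real.Gamma_pos_of_pos hq
  have hGm := Real.Gamma_pos_of_pos hm
  have h2 : Real.log (Real.Gamma ((p+q)/2) ^ 2) ≤ Real.log (Real.Gamma p * Real.Gamma q) := by
    rw [Real.log_pow, Real.log_mul (ne_of_gt hGp) (ne_of_gt hGq)]
    push_cast
    linarith
  exact (Real.log_le_log_iff (by positivity) (by positivity)).mp h2

lemma aux_key (N : ℝ) (hN : 3 ≤ N) :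
    Real.Gamma (N/2) ^ 2 ≤ ((N-1)/2) * Real.Gamma ((N-1)/2) ^ 2 ∧
    ((N-1)/2)^2 * Real.Gamma ((N-1)/2) ^ 2 ≤ (N/2) * Real.Gamma (N/2) ^ 2 := by
  have h1 : (0:ℝ) < (N-1)/2 := by linarith
  have h2 : (0:ℝ) < N/2 := by linarith
  have h3 : (0:ℝ) < (N+1)/2 := by linarith
  have h4 : (0:ℝ) < (N+2)/2 := by linarith
  have e3 : Real.Gamma ((N+1)/2) = ((N-1)/2) * Real.Gamma ((N-1)/2) := by
    have := Real.Gamma_add_one (ne_of_gt h1)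
    rw [show (N-1)/2 + 1 = (N+1)/2 by ring] at this
    exact this
  have e4 : Real.Gamma ((N+2)/2) = (N/2) * Real.Gamma (N/2) := by
    have := Real.Gamma_add_one (ne_of_gt h2)
    rw [show N/2 + 1 = (N+2)/2 by ring] at this
    exact this
  constructor
  · have := aux_gamma_sq h1 h3
    rw [show ((N-1)/2 + (N+1)/2)/2 = N/2 by ring, e3] at this
    nlinarith [Real.Gamma_pos_of_pos h1]
  · have := aux_gamma_sq h2 h4
    rw [show (N/2 + (N+2)/2)/2 = (N+1)/2 by ring, e3, e4] at this
    nlinarith [Real.Gamma_pos_of_pos h1, Real.Gamma_pos_of_pos h2]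

lemma aux_cn_bounds (N : ℝ) (hN : 3 ≤ N) :
    (1 - 1/N)/Real.sqrt (2*π) ≤
      Real.Gamma (N/2) / (Real.sqrt (π*N) * Real.Gamma ((N-1)/2)) ∧
    Real.Gamma (N/2) / (Real.sqrt (π*N) * Real.Gamma ((N-1)/2)) ≤ 1/Real.sqrt (2*π) := by
  obtain ⟨hU, hL⟩ := aux_key N hN
  have hNpos : (0:ℝ) < N := by linarith
  have h1 : (0:ℝ) < (N-1)/2 := by linarith
  have h2 : (0:ℝ) < N/2 := by linarith
  have hg1 := Real.Gamma_pos_of_pos h1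
  have hg2 := Real.Gamma_pos_of_pos h2
  have hπ := Real.pi_pos
  have hs : Real.sqrt (π*N) ^ 2 = π*N := Real.sq_sqrt (by positivity)
  have hspos : (0:ℝ) < Real.sqrt (π*N) := Real.sqrt_pos.mpr (by positivity)
  have hs2 : Real.sqrt (2*π) ^ 2 = 2*π := Real.sq_sqrt (by positivity)
  have hs2pos : (0:ℝ) < Real.sqrt (2*π) := Real.sqrt_pos.mpr (by positivity)
  set cn := Real.Gamma (N/2) / (Real.sqrt (π*N) * Real.Gamma ((N-1)/2)) with hcn
  have hcnpos : 0 < cn := by positivity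
  have hcnsq : cn ^ 2 = Real.Gamma (N/2)^2 / (π * N * Real.Gamma ((N-1)/2)^2) := by
    rw [hcn, div_pow, mul_pow, hs]
  constructor
  · have hsq : ((1 - 1/N)/Real.sqrt (2*π))^2 ≤ cn^2 := by
      rw [hcnsq, div_pow, hs2]
      rw [div_le_div_iff₀ (by positivity) (by positivity)]
      have h1m : (1 - 1/N)^2 = (N-1)^2/N^2 := by field_simp
      rw [h1m]
      have key : (N-1)^2 * Real.Gamma ((N-1)/2)^2 * 2 ≤ 4 * N * Real.Gamma (N/2)^2 := by
        nlinarith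
      calc (N-1)^2/N^2 * (π * N * Real.Gamma ((N-1)/2)^2)
          = ((N-1)^2 * Real.Gamma ((N-1)/2)^2 * 2) * (π / (2*N)) := by field_simp
        _ ≤ (4 * N * Real.Gamma (N/2)^2) * (π / (2*N)) := by
            apply mul_le_mul_of_nonneg_right key (by positivity)
        _ = Real.Gamma (N/2)^2 * (2*π) := by field_simp; ring
    have hb : (0:ℝ) ≤ (1 - 1/N)/Real.sqrt (2*π) := by
      apply div_nonneg _ (le_of_lt hs2pos)
      have : 1/N ≤ 1 := by rw [div_le_one hNpos]; linarith
      linarith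
    calc (1 - 1/N)/Real.sqrt (2*π) = Real.sqrt (((1 - 1/N)/Real.sqrt (2*π))^2) :=
          (Real.sqrt_sq hb).symm
      _ ≤ Real.sqrt (cn^2) := Real.sqrt_le_sqrt hsq
      _ = cn := Real.sqrt_sq (le_of_lt hcnpos)
  · have hsq : cn^2 ≤ (1/Real.sqrt (2*π))^2 := by
      rw [hcnsq, div_pow, hs2, one_pow]
      rw [div_le_div_iff₀ (by positivity) (by positivity)]
      nlinarith
    calc cn = Real.sqrt (cn^2) := (Real.sqrt_sq (le_of_lt hcnpos)).symm
      _ ≤ Real.sqrt ((1/Real.sqrt (2*π))^2) := Real.sqrt_le_sqrt hsq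
      _ = 1/Real.sqrt (2*π) := Real.sqrt_sq (by positivity)

lemma aux_exp_diff (a b : ℝ) : |Real.exp a - Real.exp b| ≤ Real.exp (max a b) * |a - b| := by
  rcases le_total b a with h | h
  · rw [abs_of_nonneg (by simp [Real.exp_le_exp, h]), max_eq_left h, abs_of_nonneg (by linarith)]
    have h1 : Real.exp b = Real.exp a * Real.exp (b - a) := by
      rw [← Real.exp_add]; ring_nf
    have h2 : (b - a) + 1 ≤ Real.exp (b - a) := Real.add_one_le_exp _
    nlinarith [Real.exp_pos a]
  · rw [abs_of_nonpos (by simp [Real.exp_le_exp, h]), max_eq_right h, abs_of_nonpos (by linarith)]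
    have h1 : Real.exp a = Real.exp b * Real.exp (a - b) := by
      rw [← Real.exp_add]; ring_nf
    have h2 : (a - b) + 1 ≤ Real.exp (a - b) := Real.add_one_le_exp _
    nlinarith [Real.exp_pos b]

lemma aux_cube (t : ℝ) (ht : 0 ≤ t) : 1 + t^3/13824 ≤ Real.exp (t/8) := by
  have h1 : 1 + t/24 ≤ Real.exp (t/24) := by linarith [Real.add_one_le_exp (t/24)]
  have h2 : (1 + t/24)^3 ≤ Real.exp (t/24)^3 := pow_le_pow_left₀ (by linarith) h1 3
  have h3 : Real.exp (t/24)^3 = Real.exp (t/8) := by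
    rw [← Real.exp_nat_mul]; push_cast; ring_nf
  nlinarith [sq_nonneg t, sq_nonneg (t/24)]

lemma aux_poly (t : ℝ) (ht : 0 ≤ t) :
    Real.exp (-(t)/4) * (2*t^2 + 3*t) ≤ 500000 * Real.exp (-(t)/8) := by
  have h1 : 2*t^2 + 3*t ≤ 500000 * (1 + t^3/13824) := by
    nlinarith [mul_nonneg ht (sq_nonneg (t - 1)), sq_nonneg t, sq_nonneg (t-1)]
  have h2 : 2*t^2 + 3*t ≤ 500000 * Real.exp (t/8) := by
    have := aux_cube t ht
    nlinarith
  have h3 : Real.exp (-(t)/4) = Real.exp (-(t)/8) * Real.exp (-(t/8)) := by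
    rw [← Real.exp_add]; ring_nf
  have h4 : Real.exp (-(t/8)) * Real.exp (t/8) = 1 := by
    rw [← Real.exp_add]; simp
  have hp := Real.exp_pos (-(t/8))
  have hp2 := Real.exp_pos (-(t)/8)
  calc Real.exp (-(t)/4) * (2*t^2 + 3*t)
      = Real.exp (-(t)/8) * (Real.exp (-(t/8)) * (2*t^2 + 3*t)) := by rw [h3]; ring
    _ ≤ Real.exp (-(t)/8) * (Real.exp (-(t/8)) * (500000 * Real.exp (t/8))) := by
        apply mul_le_mul_of_nonneg_left _ (le_of_lt hp2)
        apply mul_le_mul_of_nonneg_left h2 (le_of_lt hp)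
    _ = 500000 * Real.exp (-(t)/8) := by
        rw [show Real.exp (-(t/8)) * (500000 * Real.exp (t/8))
            = 500000 * (Real.exp (-(t/8)) * Real.exp (t/8)) by ring, h4]; ring

end auxx

set_option maxHeartbeats 2000000 in
theorem stmt8 :
    ∃ C : ℝ, 0 < C ∧
      ∀ n : ℕ, 3 ≤ n → ∀ x : ℝ,
        |(if x ^ 2 < (n : ℝ) then
            Real.Gamma ((n : ℝ) / 2) /
                (Real.sqrt (Real.pi * n) * Real.Gamma (((n : ℝ) - 1) / 2)) *
              (1 - x ^ 2 / (n : ℝ)) ^ (((n : ℝ) - 3) / 2)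
          else 0) -
            Real.exp (-(x ^ 2) / 2) / Real.sqrt (2 * Real.pi)| ≤
          C / n * Real.exp (-(x ^ 2) / 8) := by
  refine ⟨1000000, by norm_num, ?_⟩
  intro n hn x
  have hN : (3:ℝ) ≤ (n:ℝ) := by exact_mod_cast hn
  have hNpos : (0:ℝ) < (n:ℝ) := by linarith
  have ht : (0:ℝ) ≤ x^2 := sq_nonneg x
  have hπ := Real.pi_pos
  have hπ3 := Real.pi_gt_three
  have hs1 : (1:ℝ) ≤ Real.sqrt (2*π) := by
    rw [show (1:ℝ) = Real.sqrt 1 by simp]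
    exact Real.sqrt_le_sqrt (by linarith)
  have hexp8 : (0:ℝ) < Real.exp (-(x^2)/8) := Real.exp_pos _
  by_cases hxlt : x ^ 2 < (n:ℝ)
  · rw [if_pos hxlt]
    obtain ⟨hcnl, hcnu⟩ := aux_cn_bounds (n:ℝ) hN
    set cn := Real.Gamma ((n:ℝ)/2) / (Real.sqrt (π*(n:ℝ)) * Real.Gamma (((n:ℝ)-1)/2)) with hcne
    clear_value cn
    have hcnpos : 0 < cn := by
      refine lt_of_lt_of_le ?_ hcnl
      have : (0:ℝ) < 1 - 1/(n:ℝ) := by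
        rw [sub_pos, div_lt_one hNpos]; linarith
      positivity
    have hcn1 : cn ≤ 1 := le_trans hcnu (by
      rw [div_le_one (by linarith)]; exact hs1)
    have hbase : (0:ℝ) < 1 - x^2/(n:ℝ) := by
      rw [sub_pos, div_lt_one hNpos]; exact hxlt
    have hbase1 : 1 - x^2/(n:ℝ) ≤ 1 := by
      have : (0:ℝ) ≤ x^2/(n:ℝ) := by positivity
      linarith
    have hc : (0:ℝ) ≤ ((n:ℝ)-3)/2 := by linarith
    have hφle : Real.exp (-(x^2)/2) ≤ 1 := by
      have : Real.exp (-(x^2)/2) ≤ Real.exp 0 := Real.exp_le_exp.mpr (by linarith)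
      simpa using this
    rcases le_or_gt (n:ℝ) 5 with h5 | h5
    · -- small n : crude bound
      have hA1 : (1 - x^2/(n:ℝ)) ^ (((n:ℝ)-3)/2) ≤ 1 :=
        Real.rpow_le_one (le_of_lt hbase) hbase1 hc
      have hA0 : (0:ℝ) ≤ (1 - x^2/(n:ℝ)) ^ (((n:ℝ)-3)/2) :=
        Real.rpow_nonneg (le_of_lt hbase) _
      have hP1 : cn * (1 - x^2/(n:ℝ)) ^ (((n:ℝ)-3)/2) ≤ 1 :=
        mul_le_one₀ hcn1 hA0 hA1
      have hP0 : 0 ≤ cn * (1 - x^2/(n:ℝ)) ^ (((n:ℝ)-3)/2) := by positivity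
      have hQ1 : Real.exp (-(x^2)/2) / Real.sqrt (2*π) ≤ 1 := by
        refine le_trans (div_le_self (le_of_lt (Real.exp_pos _)) hs1) hφle
      have hQ0 : 0 ≤ Real.exp (-(x^2)/2) / Real.sqrt (2*π) := by positivity
      have habs : |cn * (1 - x^2/(n:ℝ)) ^ (((n:ℝ)-3)/2) -
          Real.exp (-(x^2)/2) / Real.sqrt (2*π)| ≤ 2 :=
        abs_le.mpr ⟨by linarith, by linarith⟩
      have he : (3:ℝ)/8 ≤ Real.exp (-(x^2)/8) := by
        have h1 := Real.add_one_le_exp (-(x^2)/8)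
        have : x^2 < 5 := lt_of_lt_of_le hxlt h5
        linarith
      have hdiv : (200000:ℝ) ≤ 1000000/(n:ℝ) := by
        rw [le_div_iff₀ hNpos]; nlinarith
      calc |cn * (1 - x^2/(n:ℝ)) ^ (((n:ℝ)-3)/2) -
            Real.exp (-(x^2)/2) / Real.sqrt (2*π)| ≤ 2 := habs
        _ ≤ 200000 * Real.exp (-(x^2)/8) := by nlinarith
        _ ≤ 1000000/(n:ℝ) * Real.exp (-(x^2)/8) := by
            exact mul_le_mul_of_nonneg_right hdiv (le_of_lt hexp8)
    · -- n ≥ 6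
      have hN6 : (6:ℝ) ≤ (n:ℝ) := by
        have : (5:ℕ) < n := by exact_mod_cast h5
        have : (6:ℕ) ≤ n := this
        exact_mod_cast this
      set u := x^2/(n:ℝ) with hue
      clear_value u
      have hu0 : 0 ≤ u := by rw [hue]; positivity
      have hu1 : u < 1 := by rw [hue, div_lt_one hNpos]; exact hxlt
      have hx2 : x^2 = u * (n:ℝ) := by rw [hue]; field_simp
      set L := Real.log (1 - u) with hLe
      clear_value L
      have hArw : (1 - u) ^ (((n:ℝ)-3)/2) = Real.exp ((((n:ℝ)-3)/2) * L) := by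
        rw [Real.rpow_def_of_pos hbase, mul_comm, ← hLe]
      have hL1 : L ≤ -u := by
        have := Real.log_le_sub_one_of_pos hbase
        rw [← hLe] at this; linarith
      have ha4 : (((n:ℝ)-3)/2) * L ≤ -(x^2)/4 := by
        have h := mul_le_mul_of_nonneg_left hL1 hc
        have h2 : (((n:ℝ)-3)/2) * (-u) ≤ -(x^2)/4 := by
          rw [hx2]; nlinarith
        linarith
      have hb4 : -(x^2)/2 ≤ -(x^2)/4 := by linarith
      have hexpA : Real.exp ((((n:ℝ)-3)/2) * L) ≤ Real.exp (-(x^2)/4) :=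
        Real.exp_le_exp.mpr ha4
      rcases le_or_gt (x^2) ((n:ℝ)/2) with hfine | hcoarse
      · -- fine region
        have hu12 : u ≤ 1/2 := by
          rw [hue, div_le_div_iff₀ hNpos (by norm_num)]; linarith
        have hL2 : -u - 2*u^2 ≤ L := by
          have hinv := Real.log_le_sub_one_of_pos (inv_pos.mpr hbase)
          rw [Real.log_inv, ← hLe] at hinv
          have hle : (1-u)⁻¹ ≤ 1 + u + 2*u^2 := by
            rw [inv_eq_one_div, div_le_iff₀ hbase]
            nlinarith [hu0, hu12, sq_nonneg u]
          linarith
        have habs : |(((n:ℝ)-3)/2) * L - (-(x^2)/2)| ≤ (2*x^4 + 3*x^2)/(n:ℝ) := by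
          have hx4 : x^4 = u^2 * (n:ℝ)^2 := by
            rw [show x^4 = (x^2)^2 by ring, hx2]; ring
          have hup := mul_le_mul_of_nonneg_left hL1 hc
          have hlo := mul_le_mul_of_nonneg_left hL2 hc
          have hd : (2*x^4 + 3*x^2)/(n:ℝ) = 2*u^2*(n:ℝ) + 3*u := by
            rw [hx4, hx2]; field_simp
          rw [hd, abs_le]
          constructor
          · nlinarith [hlo, hx2, mul_nonneg (mul_nonneg hu0 hu0) (le_of_lt hNpos), hu0, hN6]
          · nlinarith [hup, hx2, mul_nonneg (mul_nonneg hu0 hu0) (le_of_lt hNpos), hu0, hN6]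
        have hdiff : |Real.exp ((((n:ℝ)-3)/2) * L) - Real.exp (-(x^2)/2)| ≤
            Real.exp (-(x^2)/4) * ((2*x^4 + 3*x^2)/(n:ℝ)) := by
          refine le_trans (aux_exp_diff _ _) ?_
          apply mul_le_mul
          · exact Real.exp_le_exp.mpr (max_le ha4 hb4)
          · exact habs
          · exact abs_nonneg _
          · exact le_of_lt (Real.exp_pos _)
        have hK : Real.exp (-(x^2)/4) * ((2*x^4 + 3*x^2)/(n:ℝ)) ≤
            500000/(n:ℝ) * Real.exp (-(x^2)/8) := by
          have := aux_poly (x^2) ht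
          rw [show (x^2)^2 = x^4 by ring] at this
          have h2 := mul_le_mul_of_nonneg_right this (le_of_lt (inv_pos.mpr hNpos))
          calc Real.exp (-(x^2)/4) * ((2*x^4 + 3*x^2)/(n:ℝ))
              = (Real.exp (-(x^2)/4) * (2*x^4 + 3*x^2)) * ((n:ℝ))⁻¹ := by ring
            _ ≤ (500000 * Real.exp (-(x^2)/8)) * ((n:ℝ))⁻¹ := h2
            _ = 500000/(n:ℝ) * Real.exp (-(x^2)/8) := by ring
        -- assemble
        have hsp : (0:ℝ) < Real.sqrt (2*π) := by linarith
        have hcngap : 1/Real.sqrt (2*π) - cn ≤ 1/(n:ℝ) := by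
          have : (1 - 1/(n:ℝ))/Real.sqrt (2*π) = 1/Real.sqrt (2*π) - (1/(n:ℝ))/Real.sqrt (2*π) := by
            ring
          rw [this] at hcnl
          have h2 : (1/(n:ℝ))/Real.sqrt (2*π) ≤ 1/(n:ℝ) :=
            div_le_self (by positivity) hs1
          linarith
        have hEb : Real.exp (-(x^2)/2) ≤ Real.exp (-(x^2)/8) :=
          Real.exp_le_exp.mpr (by linarith)
        have key : |cn * Real.exp ((((n:ℝ)-3)/2) * L) - Real.exp (-(x^2)/2) / Real.sqrt (2*π)| ≤
            cn * |Real.exp ((((n:ℝ)-3)/2) * L) - Real.exp (-(x^2)/2)| +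
            (1/Real.sqrt (2*π) - cn) * Real.exp (-(x^2)/2) := by
          have hrw : cn * Real.exp ((((n:ℝ)-3)/2) * L) - Real.exp (-(x^2)/2) / Real.sqrt (2*π)
              = cn * (Real.exp ((((n:ℝ)-3)/2) * L) - Real.exp (-(x^2)/2))
                - (1/Real.sqrt (2*π) - cn) * Real.exp (-(x^2)/2) := by
            field_simp
            ring
          have hg : 0 ≤ 1/Real.sqrt (2*π) - cn := by linarith
          rw [hrw]
          refine le_trans (abs_sub _ _) ?_
          rw [abs_mul, abs_mul, abs_of_nonneg (le_of_lt hcnpos), abs_of_nonneg hg,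
            abs_of_nonneg (le_of_lt (Real.exp_pos (-(x^2)/2)))]
        rw [hArw]
        refine le_trans key ?_
        have hterm1 : cn * |Real.exp ((((n:ℝ)-3)/2) * L) - Real.exp (-(x^2)/2)| ≤
            500000/(n:ℝ) * Real.exp (-(x^2)/8) := by
          calc cn * |Real.exp ((((n:ℝ)-3)/2) * L) - Real.exp (-(x^2)/2)|
              ≤ 1 * (Real.exp (-(x^2)/4) * ((2*x^4 + 3*x^2)/(n:ℝ))) := by
                apply mul_le_mul hcn1 hdiff (abs_nonneg _) (by norm_num)
            _ = Real.exp (-(x^2)/4) * ((2*x^4 + 3*x^2)/(n:ℝ)) := by ring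
            _ ≤ 500000/(n:ℝ) * Real.exp (-(x^2)/8) := hK
        have hterm2 : (1/Real.sqrt (2*π) - cn) * Real.exp (-(x^2)/2) ≤
            1/(n:ℝ) * Real.exp (-(x^2)/8) := by
          apply mul_le_mul hcngap hEb (le_of_lt (Real.exp_pos _))
          positivity
        have hfin : 500000/(n:ℝ) * Real.exp (-(x^2)/8) + 1/(n:ℝ) * Real.exp (-(x^2)/8) ≤
            1000000/(n:ℝ) * Real.exp (-(x^2)/8) := by
          rw [← add_mul]
          apply mul_le_mul_of_nonneg_right _ (le_of_lt hexp8)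
          rw [← add_div, div_le_div_iff₀ hNpos hNpos]
          nlinarith
        linarith
      · -- coarse region : x^2 > n/2
        have hA0 : (0:ℝ) ≤ (1 - u) ^ (((n:ℝ)-3)/2) := Real.rpow_nonneg (le_of_lt hbase) _
        have hP : cn * (1 - u) ^ (((n:ℝ)-3)/2) ≤ Real.exp (-(x^2)/4) := by
          rw [hArw]
          simpa using mul_le_mul hcn1 hexpA (le_of_lt (Real.exp_pos _)) zero_le_one
        have hQ : Real.exp (-(x^2)/2)/Real.sqrt (2*π) ≤ Real.exp (-(x^2)/4) := by
          refine le_trans (div_le_self (le_of_lt (Real.exp_pos _)) hs1) ?_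
          exact Real.exp_le_exp.mpr (by linarith)
        have hP0 : 0 ≤ cn * (1 - u) ^ (((n:ℝ)-3)/2) := by positivity
        have hQ0 : 0 ≤ Real.exp (-(x^2)/2)/Real.sqrt (2*π) := by positivity
        have habs : |cn * (1 - u) ^ (((n:ℝ)-3)/2) - Real.exp (-(x^2)/2)/Real.sqrt (2*π)| ≤
            2 * Real.exp (-(x^2)/4) := abs_le.mpr ⟨by linarith, by linarith⟩
        have hsmall : Real.exp (-(x^2)/8) ≤ 16/(n:ℝ) := by
          have h1 : (n:ℝ)/16 ≤ Real.exp ((n:ℝ)/16) := by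
            linarith [Real.add_one_le_exp ((n:ℝ)/16)]
          have h2 : Real.exp (-(x^2)/8) ≤ Real.exp (-((n:ℝ)/16)) := by
            apply Real.exp_le_exp.mpr; linarith
          have h3 : Real.exp (-((n:ℝ)/16)) = 1/Real.exp ((n:ℝ)/16) := by
            rw [Real.exp_neg, inv_eq_one_div]
          have h4 : 1/Real.exp ((n:ℝ)/16) ≤ 1/((n:ℝ)/16) :=
            one_div_le_one_div_of_le (by positivity) h1
          have h5 : 1/((n:ℝ)/16) = 16/(n:ℝ) := by field_simp
          rw [h3] at h2
          rw [h5] at h4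
          linarith
        have hsplit : Real.exp (-(x^2)/4) = Real.exp (-(x^2)/8) * Real.exp (-(x^2)/8) := by
          rw [← Real.exp_add]; ring_nf
        calc |cn * (1 - u) ^ (((n:ℝ)-3)/2) - Real.exp (-(x^2)/2)/Real.sqrt (2*π)|
            ≤ 2 * Real.exp (-(x^2)/4) := habs
          _ = 2 * Real.exp (-(x^2)/8) * Real.exp (-(x^2)/8) := by rw [hsplit]; ring
          _ ≤ 2 * (16/(n:ℝ)) * Real.exp (-(x^2)/8) := by
              apply mul_le_mul_of_nonneg_right _ (le_of_lt hexp8)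
              apply mul_le_mul_of_nonneg_left hsmall (by norm_num)
          _ ≤ 1000000/(n:ℝ) * Real.exp (-(x^2)/8) := by
              apply mul_le_mul_of_nonneg_right _ (le_of_lt hexp8)
              rw [show 2*(16/(n:ℝ)) = 32/(n:ℝ) by ring]
              rw [div_le_div_iff₀ hNpos hNpos]; nlinarith
  · rw [if_neg hxlt]
    rw [zero_sub, abs_neg, abs_of_nonneg (by positivity)]
    have hge : (n:ℝ) ≤ x^2 := le_of_not_gt hxlt
    have h1 : Real.exp (-(x^2)/2)/Real.sqrt (2*π) ≤ Real.exp (-(x^2)/2) :=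
      div_le_self (le_of_lt (Real.exp_pos _)) hs1
    have h2 : Real.exp (-(x^2)/2) = Real.exp (-(x^2)/8) * Real.exp (-(3*x^2/8)) := by
      rw [← Real.exp_add]; ring_nf
    have h3 : Real.exp (-(3*x^2/8)) ≤ Real.exp (-(3*(n:ℝ)/8)) :=
      Real.exp_le_exp.mpr (by linarith)
    have h4 : 3*(n:ℝ)/8 ≤ Real.exp (3*(n:ℝ)/8) := by
      linarith [Real.add_one_le_exp (3*(n:ℝ)/8)]
    have h5 : Real.exp (-(3*(n:ℝ)/8)) ≤ (8/3)/(n:ℝ) := by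
      rw [Real.exp_neg, inv_eq_one_div]
      have := one_div_le_one_div_of_le (show (0:ℝ) < 3*(n:ℝ)/8 by positivity) h4
      calc 1/Real.exp (3*(n:ℝ)/8) ≤ 1/(3*(n:ℝ)/8) := this
        _ = (8/3)/(n:ℝ) := by field_simp
    calc Real.exp (-(x^2)/2)/Real.sqrt (2*π) ≤ Real.exp (-(x^2)/2) := h1
      _ = Real.exp (-(x^2)/8) * Real.exp (-(3*x^2/8)) := h2
      _ ≤ Real.exp (-(x^2)/8) * ((8/3)/(n:ℝ)) := by
          apply mul_le_mul_of_nonneg_left (le_trans h3 h5) (le_of_lt hexp8)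
      _ ≤ 1000000/(n:ℝ) * Real.exp (-(x^2)/8) := by
          rw [mul_comm]
          apply mul_le_mul_of_nonneg_right _ (le_of_lt hexp8)
          rw [div_le_div_iff₀ hNpos hNpos]; nlinarith
end

section
/- For every p ≥ 1 there is a constant c_p > 0 such that for any random vector X in R^n (n ≥ 2) with E|X|^2 = n, the characteristic function f of the typical distribution satisfies, for all t ∈ R, c_p |f(t)| ≤ (1 + σ_{2p}^p)/n^{p/2} + e^{−t^2/4}, and consequently for all T > 0, (c_p/T) ∫_0^T |f(t)| dt ≤ (1 + σ_{2p}^p)/n^{p/2} + 1/T. -/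
open MeasureTheory ProbabilityTheory Real
open scoped RealInnerProductSpace NNReal ENNReal ProbabilityTheory

namespace Stmt15Aux

variable {n : ℕ} [NeZero n]

local notation "E" => EuclideanSpace ℝ (Fin n)

noncomputable def ev (j : Fin n) : EuclideanSpace ℝ (Fin n) := EuclideanSpace.single j 1

lemma norm_ev (j : Fin n) : ‖(ev j : E)‖ = 1 := by
  simp [ev, EuclideanSpace.norm_single]

lemma inner_ev (j : Fin n) (θ : E) : ⟪ev j, θ⟫ = θ j := by
  simp [ev, EuclideanSpace.inner_single_left]

lemma inner_ev_ev {i j : Fin n} (h : i ≠ j) : ⟪ev i, (ev j : E)⟫ = 0 := by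
  rw [inner_ev]
  simp [ev, EuclideanSpace.single_apply, h.symm]

lemma sum_inner_ev_sq (θ : E) : ∑ j, ⟪ev j, θ⟫ ^ 2 = ‖θ‖ ^ 2 := by
  have h := real_inner_self_eq_norm_sq θ
  rw [PiLp.inner_apply] at h
  simp only [inner_ev]
  rw [← h]
  refine Finset.sum_congr rfl fun j _ => ?_
  rw [real_inner_self_eq_norm_sq]
  simp [Real.norm_eq_abs, sq_abs]

variable (μ : Measure (EuclideanSpace ℝ (Fin n))) [IsProbabilityMeasure μ]

/-- the spherical characteristic function -/
noncomputable def phi (s : ℝ) : ℝ := ∫ θ, Real.cos (s * ⟪ev (0 : Fin n), θ⟫) ∂μ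

noncomputable def phiD (s : ℝ) : ℝ :=
  ∫ θ, -(⟪ev (0 : Fin n), θ⟫ * Real.sin (s * ⟪ev (0 : Fin n), θ⟫)) ∂μ

noncomputable def phiDD (s : ℝ) : ℝ :=
  ∫ θ, -(⟪ev (0 : Fin n), θ⟫ ^ 2 * Real.cos (s * ⟪ev (0 : Fin n), θ⟫)) ∂μ

section Basic

variable {μ}

lemma ae_sphere (hs : μ (Metric.sphere 0 1) = 1) : ∀ᵐ θ ∂μ, ‖θ‖ = 1 := by
  have hmeas : MeasurableSet (Metric.sphere (0 : E) 1) :=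
    Metric.isClosed_sphere.measurableSet
  have : μ (Metric.sphere (0 : E) 1)ᶜ = 0 := by
    rw [measure_compl hmeas (measure_ne_top _ _), hs, measure_univ, tsub_self]
  filter_upwards [measure_eq_zero_iff_ae_notMem.mp this] with θ hθ
  simpa [Metric.mem_sphere, dist_zero_right] using not_not.mp fun hc => hθ (by simpa [Metric.mem_sphere, dist_zero_right] using hc)

lemma integrable_bdd {F : EuclideanSpace ℝ (Fin n) → ℝ} (hF : Continuous F)
    (C : ℝ) (hbd : ∀ᵐ θ ∂μ, |F θ| ≤ C) : Integrable F μ := by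
  refine (integrable_const C).mono' hF.aestronglyMeasurable ?_
  filter_upwards [hbd] with θ h
  simpa [Real.norm_eq_abs] using h

end Basic



section Inv
variable {μ : Measure (EuclideanSpace ℝ (Fin n))}

lemma integral_isoinv (hinv : ∀ T : E ≃ₗᵢ[ℝ] E, μ.map T = μ)
    (T : E ≃ₗᵢ[ℝ] E) {F : EuclideanSpace ℝ (Fin n) → ℝ}
    (hF : AEStronglyMeasurable F μ) : ∫ θ, F θ ∂μ = ∫ θ, F (T θ) ∂μ := by
  conv_lhs => rw [← hinv T]
  exact MeasureTheory.integral_map T.continuous.measurable.aemeasurable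
    (by rwa [hinv T])

lemma exists_iso_single (u : E) (hu : ‖u‖ = 1) :
    ∃ T : E ≃ₗᵢ[ℝ] E, T (EuclideanSpace.single (0 : Fin n) 1) = u := by
  set e0 : E := EuclideanSpace.single (0 : Fin n) 1 with he0
  have hne0 : ‖e0‖ = 1 := by simp [he0, EuclideanSpace.norm_single]
  by_cases h : u + e0 = 0
  · refine ⟨(LinearIsometryEquiv.neg ℝ : EuclideanSpace ℝ (Fin n) ≃ₗᵢ[ℝ] EuclideanSpace ℝ (Fin n)), ?_⟩
    show -e0 = u
    linear_combination (norm := module) - h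
  · set w : E := u + e0 with hw
    refine ⟨(Submodule.span ℝ {w}).reflection, ?_⟩
    have hw2 : ⟪w, e0⟫ = ‖w‖ ^ 2 / 2 := by
      have h1 : ‖w‖ ^ 2 = 2 + 2 * ⟪u, e0⟫ := by
        rw [hw, norm_add_sq_real, hu, hne0]; ring
      have h2 : ⟪w, e0⟫ = ⟪u, e0⟫ + 1 := by
        rw [hw, inner_add_left, real_inner_self_eq_norm_sq] at *
        rw [hne0]; ring
      rw [h1, h2]; ring
    have hwne : ‖w‖ ^ 2 ≠ 0 := by
      simpa [sq_eq_zero_iff] using (norm_ne_zero_iff.mpr h)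
    have hproj : ((Submodule.span ℝ {w}).starProjection e0 : E) = (2:ℝ)⁻¹ • w := by
      rw [Submodule.starProjection_singleton, hw2]
      simp only [RCLike.ofReal_real_eq_id, id_eq]
      congr 1
      push_cast
      field_simp
    rw [Submodule.reflection_apply, hproj]
    rw [two_smul]
    rw [hw]
    match_scalars <;> norm_num

end Inv

section Rad
variable {μ : Measure (EuclideanSpace ℝ (Fin n))} [IsProbabilityMeasure μ]
lemma sin_vanish (hinv : ∀ T : EuclideanSpace ℝ (Fin n) ≃ₗᵢ[ℝ] EuclideanSpace ℝ (Fin n), μ.map T = μ) (v : EuclideanSpace ℝ (Fin n)) :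
    ∫ θ, Real.sin ⟪v, θ⟫ ∂μ = 0 := by
  have hc : Continuous fun θ : E => Real.sin ⟪v, θ⟫ :=
    Real.continuous_sin.comp (continuous_const.inner continuous_id)
  have h := integral_isoinv hinv
    (LinearIsometryEquiv.neg ℝ : EuclideanSpace ℝ (Fin n) ≃ₗᵢ[ℝ] EuclideanSpace ℝ (Fin n))
    hc.aestronglyMeasurable
  simp only [LinearIsometryEquiv.coe_neg, inner_neg_right, Real.sin_neg] at h
  rw [integral_neg] at h
  linarith

lemma cos_radial (hinv : ∀ T : EuclideanSpace ℝ (Fin n) ≃ₗᵢ[ℝ] EuclideanSpace ℝ (Fin n), μ.map T = μ) (v : EuclideanSpace ℝ (Fin n)) :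
    ∫ θ, Real.cos ⟪v, θ⟫ ∂μ = phi μ ‖v‖ := by
  by_cases hv : v = 0
  · simp [hv, phi, inner_ev]
  · have hvn : ‖v‖ ≠ 0 := norm_ne_zero_iff.mpr hv
    obtain ⟨T, hT⟩ := exists_iso_single (‖v‖⁻¹ • v) (by
      rw [norm_smul]; simp [abs_of_nonneg (inv_nonneg.mpr (norm_nonneg v)),
        inv_mul_cancel₀ hvn])
    have hc : Continuous fun θ : E => Real.cos ⟪v, θ⟫ :=
      Real.continuous_cos.comp (continuous_const.inner continuous_id)
    have h := integral_isoinv hinv T hc.aestronglyMeasurable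
    have hv' : v = ‖v‖ • (‖v‖⁻¹ • v) := by
      rw [smul_smul, mul_inv_cancel₀ hvn, one_smul]
    have key : ∀ θ : E, ⟪v, T θ⟫ = ‖v‖ * ⟪ev (0 : Fin n), θ⟫ := by
      intro θ
      calc ⟪v, T θ⟫ = ⟪‖v‖ • (‖v‖⁻¹ • v), T θ⟫ := by rw [← hv']
        _ = ‖v‖ * ⟪T (EuclideanSpace.single (0 : Fin n) 1), T θ⟫ := by
            rw [real_inner_smul_left, hT]
        _ = ‖v‖ * ⟪ev (0 : Fin n), θ⟫ := by
            rw [LinearIsometryEquiv.inner_map_map]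
            rfl
    rw [h, phi]
    exact integral_congr_ae (Filter.Eventually.of_forall fun θ => by simp only [key θ])

lemma exp_radial (hinv : ∀ T : EuclideanSpace ℝ (Fin n) ≃ₗᵢ[ℝ] EuclideanSpace ℝ (Fin n), μ.map T = μ) (v : EuclideanSpace ℝ (Fin n)) :
    ∫ θ, Complex.exp (Complex.I * ((⟪v, θ⟫ : ℝ) : ℂ)) ∂μ = ((phi μ ‖v‖ : ℝ) : ℂ) := by
  have hsm : ∀ θ : E, Complex.exp (Complex.I * ((⟪v, θ⟫ : ℝ) : ℂ))
      = ((Real.cos ⟪v, θ⟫ : ℝ) : ℂ) + Complex.I * ((Real.sin ⟪v, θ⟫ : ℝ) : ℂ) := by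
    intro θ
    rw [mul_comm, Complex.exp_mul_I, Complex.ofReal_cos, Complex.ofReal_sin, mul_comm]
  simp only [hsm]
  have hic : Integrable (fun θ : E => ((Real.cos ⟪v, θ⟫ : ℝ) : ℂ)) μ := by
    refine (integrable_const (1 : ℝ)).mono'
      ((Complex.continuous_ofReal.comp
        (Real.continuous_cos.comp (continuous_const.inner continuous_id))).aestronglyMeasurable) ?_
    refine Filter.Eventually.of_forall fun θ => ?_
    rw [Complex.norm_real]
    simpa [Real.norm_eq_abs] using abs_cos_le_one (⟪v, θ⟫ : ℝ)
  have his : Integrable (fun θ : E => Complex.I * ((Real.sin ⟪v, θ⟫ : ℝ) : ℂ)) μ := by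
    refine (integrable_const (1 : ℝ)).mono'
      ((continuous_const.mul (Complex.continuous_ofReal.comp
        (Real.continuous_sin.comp (continuous_const.inner continuous_id)))).aestronglyMeasurable) ?_
    refine Filter.Eventually.of_forall fun θ => ?_
    rw [norm_mul, Complex.norm_I, one_mul, Complex.norm_real]
    simpa [Real.norm_eq_abs] using abs_sin_le_one (⟪v, θ⟫ : ℝ)
  rw [integral_add hic his]
  have hcos_int : Integrable (fun θ : E => Real.cos ⟪v, θ⟫) μ :=
    integrable_bdd (Real.continuous_cos.comp (continuous_const.inner continuous_id)) 1
      (Filter.Eventually.of_forall fun θ => abs_cos_le_one _)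
  have hsin_int : Integrable (fun θ : E => Real.sin ⟪v, θ⟫) μ :=
    integrable_bdd (Real.continuous_sin.comp (continuous_const.inner continuous_id)) 1
      (Filter.Eventually.of_forall fun θ => abs_sin_le_one _)
  have h1 : ∫ θ, ((Real.cos ⟪v, θ⟫ : ℝ) : ℂ) ∂μ = ((phi μ ‖v‖ : ℝ) : ℂ) := by
    have := Complex.ofRealCLM.integral_comp_comm hcos_int
    simp only [Complex.ofRealCLM_apply] at this
    rw [this, cos_radial hinv]
  have h2 : ∫ θ, Complex.I * ((Real.sin ⟪v, θ⟫ : ℝ) : ℂ) ∂μ = 0 := by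
    have : (fun θ : E => Complex.I * ((Real.sin ⟪v, θ⟫ : ℝ) : ℂ))
        = fun θ : E => Complex.I • ((Real.sin ⟪v, θ⟫ : ℝ) : ℂ) := rfl
    rw [this, integral_smul]
    have h2' := Complex.ofRealCLM.integral_comp_comm hsin_int
    simp only [Complex.ofRealCLM_apply] at h2'
    rw [h2', sin_vanish hinv]
    simp
  rw [h1, h2, add_zero]

end Rad
section Deriv
variable {μ : Measure (EuclideanSpace ℝ (Fin n))} [IsProbabilityMeasure μ]

lemma param_deriv_cos {L A : EuclideanSpace ℝ (Fin n) → ℝ} (hL : Continuous L)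
    (hA : Continuous A) (hA1 : ∀ᵐ θ ∂μ, |A θ| ≤ 1) (x₀ : ℝ) :
    HasDerivAt (fun x => ∫ θ, Real.cos (L θ + x * A θ) ∂μ)
      (∫ θ, -(A θ * Real.sin (L θ + x₀ * A θ)) ∂μ) x₀ := by
  refine (hasDerivAt_integral_of_dominated_loc_of_deriv_le (s := Metric.ball x₀ 1) (Metric.ball_mem_nhds x₀ one_pos)
    (bound := fun _ => (1 : ℝ))
    (F' := fun x θ => -(A θ * Real.sin (L θ + x * A θ))) ?_ ?_ ?_ ?_ ?_ ?_).2
  · exact Filter.Eventually.of_forall fun x =>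
      ((Real.continuous_cos.comp (hL.add (continuous_const.mul hA))).aestronglyMeasurable)
  · exact integrable_bdd (Real.continuous_cos.comp (hL.add (continuous_const.mul hA))) 1
      (Filter.Eventually.of_forall fun θ => abs_cos_le_one _)
  · exact ((hA.mul (Real.continuous_sin.comp (hL.add (continuous_const.mul hA)))).neg).aestronglyMeasurable
  · filter_upwards [hA1] with θ hθ
    intro x _
    rw [norm_neg, norm_mul]
    calc ‖A θ‖ * ‖Real.sin (L θ + x * A θ)‖ ≤ 1 * 1 := by
          apply mul_le_mul _ _ (norm_nonneg _) zero_le_one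
          · simpa [Real.norm_eq_abs] using hθ
          · simpa [Real.norm_eq_abs] using abs_sin_le_one (L θ + x * A θ)
      _ = 1 := one_mul 1
  · exact integrable_const 1
  · refine Filter.Eventually.of_forall fun θ => fun x _ => ?_
    have h1 : HasDerivAt (fun x : ℝ => L θ + x * A θ) (A θ) x := by
      simpa using (hasDerivAt_mul_const (A θ)).const_add (L θ)
    have h2 := h1.cos
    have : -Real.sin (L θ + x * A θ) * A θ = -(A θ * Real.sin (L θ + x * A θ)) := by ring
    rwa [this] at h2

lemma param_deriv_sin {L A G : EuclideanSpace ℝ (Fin n) → ℝ} (hL : Continuous L)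
    (hA : Continuous A) (hG : Continuous G) (hA1 : ∀ᵐ θ ∂μ, |A θ| ≤ 1)
    (hG1 : ∀ᵐ θ ∂μ, |G θ| ≤ 1) (x₀ : ℝ) :
    HasDerivAt (fun x => ∫ θ, G θ * Real.sin (L θ + x * A θ) ∂μ)
      (∫ θ, G θ * A θ * Real.cos (L θ + x₀ * A θ) ∂μ) x₀ := by
  refine (hasDerivAt_integral_of_dominated_loc_of_deriv_le (s := Metric.ball x₀ 1) (Metric.ball_mem_nhds x₀ one_pos)
    (bound := fun _ => (1 : ℝ))
    (F' := fun x θ => G θ * A θ * Real.cos (L θ + x * A θ)) ?_ ?_ ?_ ?_ ?_ ?_).2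
  · exact Filter.Eventually.of_forall fun x =>
      ((hG.mul (Real.continuous_sin.comp (hL.add (continuous_const.mul hA)))).aestronglyMeasurable)
  · refine integrable_bdd (hG.mul (Real.continuous_sin.comp (hL.add (continuous_const.mul hA)))) 1 ?_
    filter_upwards [hG1] with θ hθ
    rw [abs_mul]
    calc |G θ| * |Real.sin (L θ + x₀ * A θ)| ≤ 1 * 1 :=
          mul_le_mul hθ (abs_sin_le_one _) (abs_nonneg _) zero_le_one
      _ = 1 := one_mul 1
  · exact ((hG.mul hA).mul
      (Real.continuous_cos.comp (hL.add (continuous_const.mul hA)))).aestronglyMeasurable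
  · filter_upwards [hA1.and hG1] with θ hθ
    intro x _
    rw [norm_mul, norm_mul]
    have b1 : ‖G θ‖ ≤ 1 := by simpa [Real.norm_eq_abs] using hθ.2
    have b2 : ‖A θ‖ ≤ 1 := by simpa [Real.norm_eq_abs] using hθ.1
    have b3 : ‖Real.cos (L θ + x * A θ)‖ ≤ 1 := by
      simpa [Real.norm_eq_abs] using abs_cos_le_one (L θ + x * A θ)
    calc ‖G θ‖ * ‖A θ‖ * ‖Real.cos (L θ + x * A θ)‖ ≤ 1 * 1 * 1 := by
          gcongr <;> positivity
      _ = 1 := by norm_num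
  · exact integrable_const 1
  · refine Filter.Eventually.of_forall fun θ => fun x _ => ?_
    have h1 : HasDerivAt (fun x : ℝ => L θ + x * A θ) (A θ) x := by
      simpa using (hasDerivAt_mul_const (A θ)).const_add (L θ)
    have h2 := h1.sin.const_mul (G θ)
    have : G θ * (Real.cos (L θ + x * A θ) * A θ) = G θ * A θ * Real.cos (L θ + x * A θ) := by
      ring
    rwa [this] at h2

lemma cont_inner_ev (j : Fin n) : Continuous fun θ : EuclideanSpace ℝ (Fin n) => ⟪ev j, θ⟫ :=
  continuous_const.inner continuous_id

lemma phi_zero : phi μ 0 = 1 := by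
  simp [phi]

lemma phiD_zero : phiD μ 0 = 0 := by
  simp [phiD]

lemma abs_phi_le_one' (s : ℝ) : |phi μ s| ≤ 1 := by
  have := norm_integral_le_of_norm_le_const (μ := μ)
    (f := fun θ => Real.cos (s * ⟪ev (0 : Fin n), θ⟫)) (C := 1)
    (Filter.Eventually.of_forall fun θ => by
      simpa [Real.norm_eq_abs] using abs_cos_le_one (s * ⟪ev (0 : Fin n), θ⟫))
  simpa [phi, Real.norm_eq_abs, measure_univ] using this

variable (hsph : ∀ᵐ θ ∂μ, ‖θ‖ = 1)
include hsph

lemma abs_inner_ev_le (j : Fin n) : ∀ᵐ θ ∂μ, |⟪ev j, θ⟫| ≤ 1 := by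
  filter_upwards [hsph] with θ hθ
  calc |⟪ev j, θ⟫| ≤ ‖(ev j : EuclideanSpace ℝ (Fin n))‖ * ‖θ‖ := abs_real_inner_le_norm _ _
    _ = 1 := by rw [norm_ev, hθ, one_mul]

lemma phi_hasDeriv (s : ℝ) : HasDerivAt (phi μ) (phiD μ s) s := by
  have h := param_deriv_cos (μ := μ) (L := fun _ => 0) continuous_const (cont_inner_ev 0)
    (abs_inner_ev_le hsph 0) s
  simp only [zero_add] at h
  exact h

lemma phiD_hasDeriv (s : ℝ) : HasDerivAt (phiD μ) (phiDD μ s) s := by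
  have h := param_deriv_sin (μ := μ) (L := fun _ => 0) (G := fun θ => -⟪ev (0 : Fin n), θ⟫)
    continuous_const (cont_inner_ev 0) (cont_inner_ev 0).neg (abs_inner_ev_le hsph 0)
    (by filter_upwards [abs_inner_ev_le hsph 0] with θ h; rwa [abs_neg]) s
  simp only [zero_add, neg_mul] at h
  have e1 : (fun x => ∫ θ, -(⟪ev (0 : Fin n), θ⟫ * Real.sin (x * ⟪ev (0 : Fin n), θ⟫)) ∂μ)
      = phiD μ := rfl
  rw [e1] at h
  have e2 : (∫ θ, -(⟪ev (0 : Fin n), θ⟫ * ⟪ev (0 : Fin n), θ⟫ * Real.cos (s * ⟪ev (0 : Fin n), θ⟫)) ∂μ)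
      = phiDD μ s := by
    unfold phiDD
    refine integral_congr_ae (Filter.Eventually.of_forall fun θ => ?_)
    simp only
    ring_nf
  rwa [e2] at h

lemma phi_cont : Continuous (phi μ) :=
  continuous_iff_continuousAt.mpr fun s => (phi_hasDeriv hsph s).continuousAt

lemma phiD_cont : Continuous (phiD μ) :=
  continuous_iff_continuousAt.mpr fun s => (phiD_hasDeriv hsph s).continuousAt

end Deriv
section ODE
variable {μ : Measure (EuclideanSpace ℝ (Fin n))} [IsProbabilityMeasure μ]
variable (hinv : ∀ T : EuclideanSpace ℝ (Fin n) ≃ₗᵢ[ℝ] EuclideanSpace ℝ (Fin n), μ.map T = μ)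
variable (hsph : ∀ᵐ θ ∂μ, ‖θ‖ = 1)
include hinv hsph

lemma J_identity {j : Fin n} (hj : j ≠ 0) {s : ℝ} (hs : 0 < s) :
    ∫ θ, ⟪ev j, θ⟫ ^ 2 * Real.cos (s * ⟪ev (0 : Fin n), θ⟫) ∂μ = -(phiD μ s / s) := by
  set A : EuclideanSpace ℝ (Fin n) → ℝ := fun θ => ⟪ev (0 : Fin n), θ⟫ with hA
  set B : EuclideanSpace ℝ (Fin n) → ℝ := fun θ => ⟪ev j, θ⟫ with hB
  set q : ℝ → ℝ := fun ε => ∫ θ, -(B θ * Real.sin (s * A θ + ε * B θ)) ∂μ with hq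
  set r : ℝ → ℝ := fun ε => Real.sqrt (s ^ 2 + ε ^ 2) with hr
  have hr0 : r 0 = s := by
    simp [hr, Real.sqrt_sq hs.le]
  have hrpos : ∀ ε, 0 < r ε := fun ε => Real.sqrt_pos.mpr (by positivity)
  have hrder : ∀ ε, HasDerivAt r (ε / r ε) ε := by
    intro ε
    have h1 : HasDerivAt (fun ε : ℝ => s ^ 2 + ε ^ 2) (2 * ε) ε := by
      simpa using (hasDerivAt_pow 2 ε).const_add (s ^ 2)
    have h2 := (Real.hasDerivAt_sqrt (by positivity : s ^ 2 + ε ^ 2 ≠ 0)).comp ε h1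
    refine h2.congr_deriv ?_
    rw [hr]
    field_simp
  have hrad : ∀ ε : ℝ, ∫ θ, Real.cos (s * A θ + ε * B θ) ∂μ = phi μ (r ε) := by
    intro ε
    have hv := cos_radial hinv (s • ev (0 : Fin n) + ε • ev j)
    have hinner : ∀ θ : EuclideanSpace ℝ (Fin n),
        ⟪s • ev (0 : Fin n) + ε • ev j, θ⟫ = s * A θ + ε * B θ := by
      intro θ
      rw [inner_add_left, real_inner_smul_left, real_inner_smul_left]
    have hnorm : ‖s • ev (0 : Fin n) + ε • ev j‖ = r ε := by
      rw [hr]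
      rw [← Real.sqrt_sq (norm_nonneg (s • ev (0 : Fin n) + ε • ev j))]
      congr 1
      rw [norm_add_sq_real]
      rw [norm_smul, norm_smul, real_inner_smul_left, real_inner_smul_right,
        inner_ev_ev (by simpa using Ne.symm hj : (0 : Fin n) ≠ j)]
      simp only [norm_ev, Real.norm_eq_abs, mul_one, mul_zero]
      rw [sq_abs, sq_abs]
      ring
    rw [← hnorm, ← hv]
    exact integral_congr_ae (Filter.Eventually.of_forall fun θ => by simp only [hinner])
  have hgder : ∀ ε : ℝ, HasDerivAt (fun ε => ∫ θ, Real.cos (s * A θ + ε * B θ) ∂μ) (q ε) ε := by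
    intro ε
    exact param_deriv_cos (continuous_const.mul (cont_inner_ev 0)) (cont_inner_ev j)
      (abs_inner_ev_le hsph j) ε
  have hq_eq : ∀ ε, q ε = phiD μ (r ε) * (ε / r ε) := by
    intro ε
    have h1 := hgder ε
    have hfun : (fun ε => ∫ θ, Real.cos (s * A θ + ε * B θ) ∂μ) = fun ε => phi μ (r ε) :=
      funext hrad
    rw [hfun] at h1
    exact h1.unique ((phi_hasDeriv hsph (r ε)).comp ε (hrder ε))
  have hqder : HasDerivAt q (∫ θ, -(B θ ^ 2 * Real.cos (s * A θ)) ∂μ) 0 := by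
    have h := param_deriv_sin (L := fun θ => s * A θ) (A := B) (G := fun θ => -B θ)
      (continuous_const.mul (cont_inner_ev 0)) (cont_inner_ev j) (cont_inner_ev j).neg
      (abs_inner_ev_le hsph j)
      (by filter_upwards [abs_inner_ev_le hsph j] with θ h; rwa [abs_neg]) 0
    simp only [neg_mul, zero_mul, add_zero] at h
    have e2 : (∫ θ, -(B θ * B θ * Real.cos (s * A θ)) ∂μ)
        = ∫ θ, -(B θ ^ 2 * Real.cos (s * A θ)) ∂μ := by
      refine integral_congr_ae (Filter.Eventually.of_forall fun θ => ?_)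
      simp only
      ring_nf
    rw [← e2]
    convert h using 2
  have h3 : HasDerivAt (fun ε => phiD μ (r ε) * (ε / r ε)) (phiD μ s / s) 0 := by
    have hfun : (fun ε => phiD μ (r ε) * (ε / r ε)) = fun ε => (phiD μ (r ε) / r ε) * ε := by
      funext ε; ring
    rw [hfun]
    have hb : HasDerivAt (fun ε => phiD μ (r ε) / r ε)
        ((phiDD μ (r 0) * (0 / r 0) * r 0 - phiD μ (r 0) * (0 / r 0)) / r 0 ^ 2) 0 := by
      exact ((phiD_hasDeriv hsph (r 0)).comp 0 (hrder 0)).div (hrder 0) (ne_of_gt (hrpos 0))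
    have hmul := hb.mul (hasDerivAt_id 0)
    simp only [hr0, zero_div, mul_zero, zero_mul, sub_zero, id_eq, mul_one, zero_sub, neg_zero] at hmul
    refine hmul.congr_deriv ?_
    ring
  have hqq : q = fun ε => phiD μ (r ε) * (ε / r ε) := funext hq_eq
  rw [hqq] at hqder
  have hfinal := hqder.unique h3
  have hneg : ∫ θ, -(B θ ^ 2 * Real.cos (s * A θ)) ∂μ
      = -∫ θ, B θ ^ 2 * Real.cos (s * A θ) ∂μ := integral_neg _
  rw [hneg] at hfinal
  have : ∫ θ, B θ ^ 2 * Real.cos (s * A θ) ∂μ = -(phiD μ s / s) := by linarith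
  exact this

lemma integrable_sq_cos (j : Fin n) (s : ℝ) :
    Integrable (fun θ : EuclideanSpace ℝ (Fin n) =>
      ⟪ev j, θ⟫ ^ 2 * Real.cos (s * ⟪ev (0 : Fin n), θ⟫)) μ := by
  refine integrable_bdd (((cont_inner_ev j).pow 2).mul
    (Real.continuous_cos.comp (continuous_const.mul (cont_inner_ev 0)))) 1 ?_
  filter_upwards [abs_inner_ev_le hsph j] with θ hθ
  rw [abs_mul, abs_pow]
  have h1 : |⟪ev j, θ⟫| ^ 2 ≤ 1 := by nlinarith [abs_nonneg ⟪ev j, θ⟫]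
  have h2 : |Real.cos (s * ⟪ev (0 : Fin n), θ⟫)| ≤ 1 := abs_cos_le_one _
  nlinarith [abs_nonneg (Real.cos (s * ⟪ev (0 : Fin n), θ⟫)), pow_nonneg (abs_nonneg ⟪ev j, θ⟫) 2]

lemma phi_ode (hn : 2 ≤ n) {s : ℝ} (hs : 0 < s) :
    phiDD μ s = -phi μ s - ((n : ℝ) - 1) * phiD μ s / s := by
  have hDD : phiDD μ s = -∫ θ, ⟪ev (0 : Fin n), θ⟫ ^ 2 * Real.cos (s * ⟪ev (0 : Fin n), θ⟫) ∂μ := by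
    rw [phiDD, integral_neg]
  have hsplit : ∫ θ, ⟪ev (0 : Fin n), θ⟫ ^ 2 * Real.cos (s * ⟪ev (0 : Fin n), θ⟫) ∂μ
      = (∫ θ, Real.cos (s * ⟪ev (0 : Fin n), θ⟫) ∂μ)
        - ∫ θ, (1 - ⟪ev (0 : Fin n), θ⟫ ^ 2) * Real.cos (s * ⟪ev (0 : Fin n), θ⟫) ∂μ := by
    rw [← integral_sub]
    · refine integral_congr_ae (Filter.Eventually.of_forall fun θ => ?_)
      simp only
      ring
    · exact integrable_bdd (Real.continuous_cos.comp (continuous_const.mul (cont_inner_ev 0))) 1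
        (Filter.Eventually.of_forall fun θ => abs_cos_le_one _)
    · refine integrable_bdd ((continuous_const.sub ((cont_inner_ev 0).pow 2)).mul
        (Real.continuous_cos.comp (continuous_const.mul (cont_inner_ev 0)))) 1 ?_
      filter_upwards [abs_inner_ev_le hsph 0] with θ hθ
      rw [abs_mul]
      have h1 : |1 - ⟪ev (0 : Fin n), θ⟫ ^ 2| ≤ 1 := by
        rw [abs_le]
        constructor <;> nlinarith [abs_nonneg ⟪ev (0 : Fin n), θ⟫, sq_abs ⟪ev (0 : Fin n), θ⟫]
      have h2 : |Real.cos (s * ⟪ev (0 : Fin n), θ⟫)| ≤ 1 := abs_cos_le_one _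
      nlinarith [abs_nonneg (1 - ⟪ev (0 : Fin n), θ⟫ ^ 2),
        abs_nonneg (Real.cos (s * ⟪ev (0 : Fin n), θ⟫))]
  have hsum : ∫ θ, (1 - ⟪ev (0 : Fin n), θ⟫ ^ 2) * Real.cos (s * ⟪ev (0 : Fin n), θ⟫) ∂μ
      = ((n : ℝ) - 1) * -(phiD μ s / s) := by
    have hae : ∫ θ, (1 - ⟪ev (0 : Fin n), θ⟫ ^ 2) * Real.cos (s * ⟪ev (0 : Fin n), θ⟫) ∂μ
        = ∫ θ, (∑ j ∈ Finset.univ.erase (0 : Fin n),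
            ⟪ev j, θ⟫ ^ 2 * Real.cos (s * ⟪ev (0 : Fin n), θ⟫)) ∂μ := by
      refine integral_congr_ae ?_
      filter_upwards [hsph] with θ hθ
      have hsq : ∑ j, ⟪ev j, θ⟫ ^ 2 = 1 := by
        rw [sum_inner_ev_sq, hθ]; norm_num
      have herase : ⟪ev (0 : Fin n), θ⟫ ^ 2
          + ∑ j ∈ Finset.univ.erase (0 : Fin n), ⟪ev j, θ⟫ ^ 2 = 1 := by
        have h' := Finset.add_sum_erase Finset.univ (fun j : Fin n => ⟪ev j, θ⟫ ^ 2)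
          (Finset.mem_univ (0 : Fin n))
        rw [hsq] at h'
        exact h'
      rw [← Finset.sum_mul]
      have : (1 : ℝ) - ⟪ev (0 : Fin n), θ⟫ ^ 2
          = ∑ j ∈ Finset.univ.erase (0 : Fin n), ⟪ev j, θ⟫ ^ 2 := by linarith
      rw [this]
    rw [hae, integral_finset_sum _ (fun j _ => integrable_sq_cos hinv hsph j s)]
    have heach : ∀ j ∈ Finset.univ.erase (0 : Fin n),
        ∫ θ, ⟪ev j, θ⟫ ^ 2 * Real.cos (s * ⟪ev (0 : Fin n), θ⟫) ∂μ = -(phiD μ s / s) := by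
      intro j hjmem
      exact J_identity hinv hsph (Finset.ne_of_mem_erase hjmem) hs
    rw [Finset.sum_congr rfl heach, Finset.sum_const,
      Finset.card_erase_of_mem (Finset.mem_univ _), Finset.card_univ, Fintype.card_fin,
      nsmul_eq_mul]
    congr 1
    have h1 : (1 : ℕ) ≤ n := le_trans (by norm_num) hn
    push_cast [Nat.cast_sub h1]
    ring
  rw [hDD, hsplit, hsum]
  rw [show (∫ θ, Real.cos (s * ⟪ev (0 : Fin n), θ⟫) ∂μ) = phi μ s from rfl]
  ring

end ODE
section Sturm
variable {μ : Measure (EuclideanSpace ℝ (Fin n))} [IsProbabilityMeasure μ]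
variable (hinv : ∀ T : EuclideanSpace ℝ (Fin n) ≃ₗᵢ[ℝ] EuclideanSpace ℝ (Fin n), μ.map T = μ)
variable (hsph : ∀ᵐ θ ∂μ, ‖θ‖ = 1) (hn : 2 ≤ n)
include hinv hsph hn

lemma sturm_deriv (α : ℝ) {s : ℝ} (hs : 0 < s) :
    HasDerivAt (fun t => t ^ (n - 1) * (Real.exp (-(α * t ^ 2)) * (phiD μ t + 2 * α * t * phi μ t)))
      (s ^ (n - 1) * Real.exp (-(α * s ^ 2)) * phi μ s * (2 * α * (n : ℝ) - 1 - 4 * α ^ 2 * s ^ 2))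
      s := by
  obtain ⟨m, rfl⟩ : ∃ m, n = m + 2 := ⟨n - 2, by omega⟩
  have hphi := phi_hasDeriv hsph s
  have hphiD := phiD_hasDeriv hsph s
  have hgexp : HasDerivAt (fun t : ℝ => Real.exp (-(α * t ^ 2)))
      (Real.exp (-(α * s ^ 2)) * (-(α * (2 * s)))) s := by
    have h1 : HasDerivAt (fun t : ℝ => -(α * t ^ 2)) (-(α * (2 * s))) s := by
      have h0 := ((hasDerivAt_pow 2 s).const_mul α).neg
      norm_num at h0
      refine h0.congr_deriv ?_
      try ring
    exact h1.exp
  have hlin : HasDerivAt (fun t : ℝ => 2 * α * t) (2 * α) s := by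
    simpa using (hasDerivAt_id s).const_mul (2 * α)
  have hprod : HasDerivAt (fun t => 2 * α * t * phi μ t)
      (2 * α * phi μ s + 2 * α * s * phiD μ s) s := by
    have h := hlin.mul hphi
    refine h.congr_deriv ?_
    try ring
  have hsum := hphiD.add hprod
  have hW := hgexp.mul hsum
  have hpow := hasDerivAt_pow (m + 1) s
  have hM := hpow.mul hW
  refine hM.congr_deriv ?_
  rw [phi_ode hinv hsph hn hs]
  have hne : s ≠ 0 := ne_of_gt hs
  show _ = _
  simp only [Pi.mul_apply, Pi.add_apply]
  push_cast
  field_simp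
  ring

lemma comp_upper (b : ℝ) (hb : 0 < b) (hpos : ∀ r ∈ Set.Ioo (0 : ℝ) b, 0 ≤ phi μ r) :
    ∀ s ∈ Set.Icc (0 : ℝ) b, phi μ s ≤ Real.exp (-(s ^ 2 / (2 * (n : ℝ)))) := by
  have hN : (0 : ℝ) < (n : ℝ) := by positivity
  set α : ℝ := 1 / (2 * (n : ℝ)) with hα
  have hcont : Continuous fun t : ℝ =>
      t ^ (n - 1) * (Real.exp (-(α * t ^ 2)) * (phiD μ t + 2 * α * t * phi μ t)) := by
    apply (continuous_pow _).mul
    apply (Real.continuous_exp.comp (continuous_const.mul (continuous_pow 2)).neg).mul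
    exact (phiD_cont hsph).add ((continuous_const.mul continuous_id).mul (phi_cont hsph))
  have hManti : AntitoneOn (fun t : ℝ =>
      t ^ (n - 1) * (Real.exp (-(α * t ^ 2)) * (phiD μ t + 2 * α * t * phi μ t)))
      (Set.Icc 0 b) := by
    apply antitoneOn_of_deriv_nonpos (convex_Icc 0 b) hcont.continuousOn
    · intro x hx
      rw [interior_Icc] at hx
      exact ((sturm_deriv hinv hsph hn α hx.1).differentiableAt).differentiableWithinAt
    · intro x hx
      rw [interior_Icc] at hx
      rw [(sturm_deriv hinv hsph hn α hx.1).deriv]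
      have hfac : 2 * α * (n : ℝ) - 1 - 4 * α ^ 2 * x ^ 2 ≤ 0 := by
        have h2 : 2 * α * (n : ℝ) = 1 := by
          rw [hα]; field_simp
        rw [h2]
        nlinarith [sq_nonneg (α * x)]
      have h123 : 0 ≤ x ^ (n - 1) * Real.exp (-(α * x ^ 2)) * phi μ x :=
        mul_nonneg (mul_nonneg (pow_nonneg hx.1.le _) (Real.exp_nonneg _)) (hpos x hx)
      exact mul_nonpos_of_nonneg_of_nonpos h123 hfac
  have hM0 : (fun t : ℝ =>
      t ^ (n - 1) * (Real.exp (-(α * t ^ 2)) * (phiD μ t + 2 * α * t * phi μ t))) 0 = 0 := by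
    simp only
    rw [zero_pow (by omega : n - 1 ≠ 0), zero_mul]
  have hWle : ∀ x ∈ Set.Ioo (0 : ℝ) b, phiD μ x + 2 * α * x * phi μ x ≤ 0 := by
    intro x hx
    have hMx := hManti (Set.mem_Icc.mpr ⟨le_refl 0, hb.le⟩)
      (Set.mem_Icc.mpr ⟨hx.1.le, hx.2.le⟩) hx.1.le
    rw [hM0] at hMx
    simp only at hMx
    have hpowpos : (0 : ℝ) < x ^ (n - 1) := pow_pos hx.1 _
    have hexppos : (0 : ℝ) < Real.exp (-(α * x ^ 2)) := Real.exp_pos _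
    by_contra hcon
    push_neg at hcon
    nlinarith [mul_pos hpowpos (mul_pos hexppos hcon)]
  have hRanti : AntitoneOn (fun t : ℝ => phi μ t * Real.exp (α * t ^ 2)) (Set.Icc 0 b) := by
    apply antitoneOn_of_deriv_nonpos (convex_Icc 0 b)
    · exact ((phi_cont hsph).mul
        (Real.continuous_exp.comp (continuous_const.mul (continuous_pow 2)))).continuousOn
    · intro x hx
      rw [interior_Icc] at hx
      have hgexp2 : HasDerivAt (fun t : ℝ => Real.exp (α * t ^ 2))
          (Real.exp (α * x ^ 2) * (α * (2 * x))) x := by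
        have h1 : HasDerivAt (fun t : ℝ => α * t ^ 2) (α * (2 * x)) x := by
          have h0 := (hasDerivAt_pow 2 x).const_mul α
          norm_num at h0
          refine h0.congr_deriv ?_
          try ring
        exact h1.exp
      exact (((phi_hasDeriv hsph x).mul hgexp2).differentiableAt).differentiableWithinAt
    · intro x hx
      rw [interior_Icc] at hx
      have hgexp2 : HasDerivAt (fun t : ℝ => Real.exp (α * t ^ 2))
          (Real.exp (α * x ^ 2) * (α * (2 * x))) x := by
        have h1 : HasDerivAt (fun t : ℝ => α * t ^ 2) (α * (2 * x)) x := by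
          have h0 := (hasDerivAt_pow 2 x).const_mul α
          norm_num at h0
          refine h0.congr_deriv ?_
          try ring
        exact h1.exp
      rw [HasDerivAt.deriv (f := fun t : ℝ => phi μ t * Real.exp (α * t ^ 2)) ((phi_hasDeriv hsph x).mul hgexp2)]
      have hval : phiD μ x * Real.exp (α * x ^ 2) + phi μ x * (Real.exp (α * x ^ 2) * (α * (2 * x)))
          = Real.exp (α * x ^ 2) * (phiD μ x + 2 * α * x * phi μ x) := by ring
      rw [hval]
      exact mul_nonpos_of_nonneg_of_nonpos (Real.exp_nonneg _) (hWle x hx)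
  intro x hx
  have hR := hRanti (Set.mem_Icc.mpr ⟨le_refl 0, hb.le⟩) hx hx.1
  simp only at hR
  have hR0 : phi μ 0 * Real.exp (α * 0 ^ 2) = 1 := by
    rw [phi_zero]; norm_num
  rw [hR0] at hR
  have hkey : phi μ x = phi μ x * Real.exp (α * x ^ 2) * Real.exp (-(α * x ^ 2)) := by
    rw [mul_assoc, ← Real.exp_add, add_neg_cancel, Real.exp_zero, mul_one]
  rw [hkey]
  calc phi μ x * Real.exp (α * x ^ 2) * Real.exp (-(α * x ^ 2))
      ≤ 1 * Real.exp (-(α * x ^ 2)) :=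
        mul_le_mul_of_nonneg_right hR (Real.exp_nonneg _)
    _ = Real.exp (-(x ^ 2 / (2 * (n : ℝ)))) := by
        rw [one_mul]
        congr 1
        rw [hα]
        ring

lemma comp_lower (b : ℝ) (hb : 0 < b) (hb2 : b ≤ (n : ℝ) / 2)
    (hpos : ∀ r ∈ Set.Ioo (0 : ℝ) b, 0 ≤ phi μ r) :
    ∀ s ∈ Set.Icc (0 : ℝ) b, Real.exp (-(s ^ 2 / (n : ℝ))) ≤ phi μ s := by
  have hN : (0 : ℝ) < (n : ℝ) := by positivity
  set α : ℝ := 1 / (n : ℝ) with hα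
  have hcont : Continuous fun t : ℝ =>
      t ^ (n - 1) * (Real.exp (-(α * t ^ 2)) * (phiD μ t + 2 * α * t * phi μ t)) := by
    apply (continuous_pow _).mul
    apply (Real.continuous_exp.comp (continuous_const.mul (continuous_pow 2)).neg).mul
    exact (phiD_cont hsph).add ((continuous_const.mul continuous_id).mul (phi_cont hsph))
  have hMmono : MonotoneOn (fun t : ℝ =>
      t ^ (n - 1) * (Real.exp (-(α * t ^ 2)) * (phiD μ t + 2 * α * t * phi μ t)))
      (Set.Icc 0 b) := by
    apply monotoneOn_of_deriv_nonneg (convex_Icc 0 b) hcont.continuousOn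
    · intro x hx
      rw [interior_Icc] at hx
      exact ((sturm_deriv hinv hsph hn α hx.1).differentiableAt).differentiableWithinAt
    · intro x hx
      rw [interior_Icc] at hx
      rw [(sturm_deriv hinv hsph hn α hx.1).deriv]
      have hfac : 0 ≤ 2 * α * (n : ℝ) - 1 - 4 * α ^ 2 * x ^ 2 := by
        have h2 : 2 * α * (n : ℝ) = 2 := by
          rw [hα]; field_simp
        have hxb : x ≤ (n : ℝ) / 2 := le_trans hx.2.le hb2
        have hx0 : (0 : ℝ) ≤ x := hx.1.le
        have hxx : x ^ 2 ≤ ((n : ℝ) / 2) ^ 2 := by nlinarith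
        have h4 : 4 * α ^ 2 * x ^ 2 ≤ 1 := by
          calc 4 * α ^ 2 * x ^ 2 = 4 * x ^ 2 / (n : ℝ) ^ 2 := by rw [hα]; ring
            _ ≤ 4 * ((n : ℝ) / 2) ^ 2 / (n : ℝ) ^ 2 := by gcongr
            _ = 1 := by field_simp; ring
        linarith
      have h123 : 0 ≤ x ^ (n - 1) * Real.exp (-(α * x ^ 2)) * phi μ x :=
        mul_nonneg (mul_nonneg (pow_nonneg hx.1.le _) (Real.exp_nonneg _)) (hpos x hx)
      exact mul_nonneg h123 hfac
  have hM0 : (fun t : ℝ =>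
      t ^ (n - 1) * (Real.exp (-(α * t ^ 2)) * (phiD μ t + 2 * α * t * phi μ t))) 0 = 0 := by
    simp only
    rw [zero_pow (by omega : n - 1 ≠ 0), zero_mul]
  have hWge : ∀ x ∈ Set.Ioo (0 : ℝ) b, 0 ≤ phiD μ x + 2 * α * x * phi μ x := by
    intro x hx
    have hMx := hMmono (Set.mem_Icc.mpr ⟨le_refl 0, hb.le⟩)
      (Set.mem_Icc.mpr ⟨hx.1.le, hx.2.le⟩) hx.1.le
    rw [hM0] at hMx
    simp only at hMx
    have hpowpos : (0 : ℝ) < x ^ (n - 1) := pow_pos hx.1 _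
    have hexppos : (0 : ℝ) < Real.exp (-(α * x ^ 2)) := Real.exp_pos _
    by_contra hcon
    push_neg at hcon
    have hcon' : 0 < -(phiD μ x + 2 * α * x * phi μ x) := by linarith
    nlinarith [mul_pos hpowpos (mul_pos hexppos hcon')]
  have hRmono : MonotoneOn (fun t : ℝ => phi μ t * Real.exp (α * t ^ 2)) (Set.Icc 0 b) := by
    apply monotoneOn_of_deriv_nonneg (convex_Icc 0 b)
    · exact ((phi_cont hsph).mul
        (Real.continuous_exp.comp (continuous_const.mul (continuous_pow 2)))).continuousOn
    · intro x hx
      rw [interior_Icc] at hx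
      have hgexp2 : HasDerivAt (fun t : ℝ => Real.exp (α * t ^ 2))
          (Real.exp (α * x ^ 2) * (α * (2 * x))) x := by
        have h1 : HasDerivAt (fun t : ℝ => α * t ^ 2) (α * (2 * x)) x := by
          have h0 := (hasDerivAt_pow 2 x).const_mul α
          norm_num at h0
          refine h0.congr_deriv ?_
          try ring
        exact h1.exp
      exact (((phi_hasDeriv hsph x).mul hgexp2).differentiableAt).differentiableWithinAt
    · intro x hx
      rw [interior_Icc] at hx
      have hgexp2 : HasDerivAt (fun t : ℝ => Real.exp (α * t ^ 2))
          (Real.exp (α * x ^ 2) * (α * (2 * x))) x := by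
        have h1 : HasDerivAt (fun t : ℝ => α * t ^ 2) (α * (2 * x)) x := by
          have h0 := (hasDerivAt_pow 2 x).const_mul α
          norm_num at h0
          refine h0.congr_deriv ?_
          try ring
        exact h1.exp
      rw [HasDerivAt.deriv (f := fun t : ℝ => phi μ t * Real.exp (α * t ^ 2)) ((phi_hasDeriv hsph x).mul hgexp2)]
      have hval : phiD μ x * Real.exp (α * x ^ 2) + phi μ x * (Real.exp (α * x ^ 2) * (α * (2 * x)))
          = Real.exp (α * x ^ 2) * (phiD μ x + 2 * α * x * phi μ x) := by ring
      rw [hval]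
      exact mul_nonneg (Real.exp_nonneg _) (hWge x hx)
  intro x hx
  have hR := hRmono (Set.mem_Icc.mpr ⟨le_refl 0, hb.le⟩) hx hx.1
  simp only at hR
  have hR0 : phi μ 0 * Real.exp (α * 0 ^ 2) = 1 := by
    rw [phi_zero]; norm_num
  rw [hR0] at hR
  have hkey : Real.exp (-(x ^ 2 / (n : ℝ))) = Real.exp (-(α * x ^ 2)) := by
    congr 1
    rw [hα]; ring
  rw [hkey]
  have h2 : Real.exp (-(α * x ^ 2)) ≤ phi μ x * Real.exp (α * x ^ 2) * Real.exp (-(α * x ^ 2)) := by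
    calc Real.exp (-(α * x ^ 2)) = 1 * Real.exp (-(α * x ^ 2)) := (one_mul _).symm
      _ ≤ phi μ x * Real.exp (α * x ^ 2) * Real.exp (-(α * x ^ 2)) :=
        mul_le_mul_of_nonneg_right hR (Real.exp_nonneg _)
  rwa [mul_assoc, ← Real.exp_add, add_neg_cancel, Real.exp_zero, mul_one] at h2

end Sturm
section Bounds
variable {μ : Measure (EuclideanSpace ℝ (Fin n))} [IsProbabilityMeasure μ]
variable (hinv : ∀ T : EuclideanSpace ℝ (Fin n) ≃ₗᵢ[ℝ] EuclideanSpace ℝ (Fin n), μ.map T = μ)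
variable (hsph : ∀ᵐ θ ∂μ, ‖θ‖ = 1) (hn : 2 ≤ n)
include hinv hsph hn

lemma nR_pos : (0 : ℝ) < (n : ℝ) := by
  have : (2 : ℝ) ≤ (n : ℝ) := by exact_mod_cast hn
  linarith

lemma phi_pos : ∀ s ∈ Set.Icc (0 : ℝ) ((n : ℝ) / 2), 0 < phi μ s := by
  by_contra hc
  push_neg at hc
  obtain ⟨s₀, hs₀, hle⟩ := hc
  set Z : Set ℝ := Set.Icc (0 : ℝ) ((n : ℝ) / 2) ∩ (phi μ) ⁻¹' Set.Iic 0 with hZ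
  have hZne : Z.Nonempty := ⟨s₀, hs₀, hle⟩
  have hZclosed : IsClosed Z :=
    IsClosed.inter isClosed_Icc (isClosed_Iic.preimage (phi_cont hsph))
  have hbdd : BddBelow Z := ⟨0, fun t ht => ht.1.1⟩
  have hbmem : sInf Z ∈ Z := hZclosed.csInf_mem hZne hbdd
  set b := sInf Z with hbdef
  have hble : phi μ b ≤ 0 := hbmem.2
  have hb0 : 0 < b := by
    rcases eq_or_lt_of_le hbmem.1.1 with h | h
    · exfalso
      rw [← h, phi_zero] at hble
      linarith
    · exact h
  have hposIoo : ∀ r ∈ Set.Ioo (0 : ℝ) b, 0 ≤ phi μ r := by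
    intro r hr
    by_contra hneg
    push_neg at hneg
    have hrZ : r ∈ Z := ⟨⟨hr.1.le, le_trans hr.2.le hbmem.1.2⟩, hneg.le⟩
    have := csInf_le hbdd hrZ
    linarith [hr.2]
  have hlow := comp_lower hinv hsph hn b hb0 hbmem.1.2 hposIoo b
    (Set.mem_Icc.mpr ⟨hb0.le, le_refl b⟩)
  have := Real.exp_pos (-(b ^ 2 / (n : ℝ)))
  linarith

lemma phi_le_u : ∀ s ∈ Set.Icc (0 : ℝ) ((n : ℝ) / 2),
    phi μ s ≤ Real.exp (-(s ^ 2 / (2 * (n : ℝ)))) := by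
  have hN := nR_pos hinv hsph hn (μ := μ)
  exact comp_upper hinv hsph hn ((n : ℝ) / 2) (by linarith)
    (fun r hr => (phi_pos hinv hsph hn r ⟨hr.1.le, hr.2.le⟩).le)

lemma energy {a c : ℝ} (ha : 0 < a) (hac : a ≤ c) :
    phi μ c ^ 2 + phiD μ c ^ 2 ≤ phi μ a ^ 2 + phiD μ a ^ 2 := by
  have hanti : AntitoneOn (fun t => phi μ t ^ 2 + phiD μ t ^ 2) (Set.Icc a c) := by
    apply antitoneOn_of_deriv_nonpos (convex_Icc a c)
    · exact (((phi_cont hsph).pow 2).add ((phiD_cont hsph).pow 2)).continuousOn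
    · intro x hx
      rw [interior_Icc] at hx
      exact (((phi_hasDeriv hsph x).pow 2).add
        ((phiD_hasDeriv hsph x).pow 2)).differentiableAt.differentiableWithinAt
    · intro x hx
      rw [interior_Icc] at hx
      have hxpos : 0 < x := ha.trans hx.1
      have hD := ((phi_hasDeriv hsph x).pow 2).add ((phiD_hasDeriv hsph x).pow 2)
      rw [HasDerivAt.deriv (f := fun t => phi μ t ^ 2 + phiD μ t ^ 2) hD, phi_ode hinv hsph hn hxpos]
      have hn1 : (1 : ℝ) ≤ (n : ℝ) := by
        have : (2 : ℝ) ≤ (n : ℝ) := by exact_mod_cast hn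
        linarith
      have hkey : ((2 : ℕ) : ℝ) * phi μ x ^ (2 - 1) * phiD μ x
          + ((2 : ℕ) : ℝ) * phiD μ x ^ (2 - 1) * (-phi μ x - ((n : ℝ) - 1) * phiD μ x / x)
          = -(2 * ((n : ℝ) - 1) * phiD μ x ^ 2) / x := by
        norm_num
        field_simp
        ring
      rw [hkey]
      apply div_nonpos_of_nonpos_of_nonneg _ hxpos.le
      nlinarith [sq_nonneg (phiD μ x)]
  exact hanti (Set.mem_Icc.mpr ⟨le_refl a, hac⟩) (Set.mem_Icc.mpr ⟨hac, le_refl c⟩) hac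

lemma mono_pt : MonotoneOn (fun s : ℝ => s ^ (n - 1) * Real.exp (-(s ^ 2 / (2 * (n : ℝ)))))
    (Set.Icc (0 : ℝ) ((n : ℝ) / 2)) := by
  have hN := nR_pos hinv hsph hn (μ := μ)
  have hder : ∀ x : ℝ, HasDerivAt (fun s : ℝ => s ^ (n - 1) * Real.exp (-(s ^ 2 / (2 * (n : ℝ)))))
      ((n - 1 : ℕ) * x ^ (n - 1 - 1) * Real.exp (-(x ^ 2 / (2 * (n : ℝ))))
        + x ^ (n - 1) * (Real.exp (-(x ^ 2 / (2 * (n : ℝ)))) * (-(2 * x / (2 * (n : ℝ)))))) x := by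
    intro x
    have h1 : HasDerivAt (fun s : ℝ => -(s ^ 2 / (2 * (n : ℝ)))) (-(2 * x / (2 * (n : ℝ)))) x := by
      have h0 := ((hasDerivAt_pow 2 x).div_const (2 * (n : ℝ))).neg
      norm_num at h0 ⊢
      refine h0.congr_deriv ?_
      try ring
    exact (hasDerivAt_pow (n - 1) x).mul h1.exp
  apply monotoneOn_of_deriv_nonneg (convex_Icc _ _)
  · exact ((continuous_pow _).mul
      (Real.continuous_exp.comp ((continuous_pow 2).div_const _).neg)).continuousOn
  · exact fun x _ => (hder x).differentiableAt.differentiableWithinAt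
  · intro x hx
    rw [interior_Icc] at hx
    rw [(hder x).deriv]
    obtain ⟨m, hm⟩ : ∃ m, n = m + 2 := ⟨n - 2, by omega⟩
    subst hm
    have hx0 : 0 < x := hx.1
    have hxb : x ≤ ((m + 2 : ℕ) : ℝ) / 2 := hx.2.le
    have hepos : 0 < Real.exp (-(x ^ 2 / (2 * ((m + 2 : ℕ) : ℝ)))) := Real.exp_pos _
    have hNm : ((m + 2 : ℕ) : ℝ) = (m : ℝ) + 2 := by push_cast; ring
    have hkey : ((m + 2 : ℕ) - 1 : ℕ) * x ^ ((m + 2 : ℕ) - 1 - 1)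
          * Real.exp (-(x ^ 2 / (2 * ((m + 2 : ℕ) : ℝ))))
        + x ^ ((m + 2 : ℕ) - 1) * (Real.exp (-(x ^ 2 / (2 * ((m + 2 : ℕ) : ℝ))))
          * (-(2 * x / (2 * ((m + 2 : ℕ) : ℝ)))))
        = x ^ m * Real.exp (-(x ^ 2 / (2 * ((m + 2 : ℕ) : ℝ))))
          * (((m : ℝ) + 1) - x ^ 2 / ((m : ℝ) + 2)) := by
      have hred1 : (m + 2 : ℕ) - 1 = m + 1 := by omega
      have hred2 : (m + 2 : ℕ) - 1 - 1 = m := by omega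
      rw [hred2, hred1]
      have hne : ((m : ℝ) + 2) ≠ 0 := by positivity
      rw [hNm]
      push_cast
      field_simp
      ring
    rw [hkey]
    apply mul_nonneg (mul_nonneg (pow_nonneg hx0.le _) hepos.le)
    have hmr : (0 : ℝ) ≤ (m : ℝ) := Nat.cast_nonneg m
    rw [sub_nonneg, div_le_iff₀ (by positivity)]
    rw [hNm] at hxb
    nlinarith

lemma u_at_half : Real.exp (-(((n : ℝ) / 2) ^ 2 / (2 * (n : ℝ)))) = Real.exp (-((n : ℝ) / 8)) := by
  have hN := nR_pos hinv hsph hn (μ := μ)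
  congr 1
  field_simp
  ring

lemma phiD_at_half : |phiD μ ((n : ℝ) / 2)| ≤ ((n : ℝ) / 2) * Real.exp (-((n : ℝ) / 8)) := by
  have hN := nR_pos hinv hsph hn (μ := μ)
  set b : ℝ := (n : ℝ) / 2 with hbdef
  have hb : 0 < b := by rw [hbdef]; linarith
  have hQder : ∀ s ∈ Set.Ioo (0 : ℝ) b, HasDerivWithinAt (fun t => t ^ (n - 1) * phiD μ t)
      (-(s ^ (n - 1) * phi μ s)) (Set.Ioi s) s := by
    intro s hs
    have hD := (hasDerivAt_pow (n - 1) s).mul (phiD_hasDeriv hsph s)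
    have heq : ((n - 1 : ℕ) : ℝ) * s ^ (n - 1 - 1) * phiD μ s + s ^ (n - 1) * phiDD μ s
        = -(s ^ (n - 1) * phi μ s) := by
      obtain ⟨m, hm⟩ : ∃ m, n = m + 2 := ⟨n - 2, by omega⟩
      subst hm
      rw [phi_ode hinv hsph hn hs.1]
      have hred1 : (m + 2 : ℕ) - 1 = m + 1 := by omega
      have hred2 : (m + 2 : ℕ) - 1 - 1 = m := by omega
      rw [hred2, hred1]
      have hsne : s ≠ 0 := ne_of_gt hs.1
      push_cast
      field_simp
      ring
    rw [heq] at hD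
    exact hD.hasDerivWithinAt
  have hcontQ : ContinuousOn (fun t : ℝ => t ^ (n - 1) * phiD μ t) (Set.Icc 0 b) :=
    ((continuous_pow _).mul (phiD_cont hsph)).continuousOn
  have hII : IntervalIntegrable (fun s : ℝ => -(s ^ (n - 1) * phi μ s)) volume 0 b :=
    (((continuous_pow _).mul (phi_cont hsph)).neg).intervalIntegrable _ _
  have hFTC := intervalIntegral.integral_eq_sub_of_hasDeriv_right_of_le hb.le hcontQ hQder hII
  have hQ0 : (0 : ℝ) ^ (n - 1) * phiD μ 0 = 0 := by
    rw [zero_pow (by omega : n - 1 ≠ 0), zero_mul]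
  rw [hQ0, sub_zero] at hFTC
  have hInt : ∫ s in (0 : ℝ)..b, -(s ^ (n - 1) * phi μ s)
      = -∫ s in (0 : ℝ)..b, s ^ (n - 1) * phi μ s := by
    rw [intervalIntegral.integral_neg]
  rw [hInt] at hFTC
  set I : ℝ := ∫ s in (0 : ℝ)..b, s ^ (n - 1) * phi μ s with hIdef
  have hInonneg : 0 ≤ I := by
    apply intervalIntegral.integral_nonneg hb.le
    intro s hs
    exact mul_nonneg (pow_nonneg hs.1 _)
      (phi_pos hinv hsph hn s ⟨hs.1, hs.2⟩).le
  have hIle : I ≤ b * (b ^ (n - 1) * Real.exp (-((n : ℝ) / 8))) := by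
    have hptw : ∀ s ∈ Set.Icc (0 : ℝ) b, s ^ (n - 1) * phi μ s
        ≤ b ^ (n - 1) * Real.exp (-((n : ℝ) / 8)) := by
      intro s hs
      calc s ^ (n - 1) * phi μ s
          ≤ s ^ (n - 1) * Real.exp (-(s ^ 2 / (2 * (n : ℝ)))) := by
            apply mul_le_mul_of_nonneg_left _ (pow_nonneg hs.1 _)
            exact phi_le_u hinv hsph hn s hs
        _ ≤ b ^ (n - 1) * Real.exp (-(b ^ 2 / (2 * (n : ℝ)))) :=
            mono_pt hinv hsph hn hs (Set.mem_Icc.mpr ⟨hb.le, le_refl b⟩) hs.2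
        _ = b ^ (n - 1) * Real.exp (-((n : ℝ) / 8)) := by
            rw [hbdef, u_at_half hinv hsph hn (μ := μ)]
    have hi1 : IntervalIntegrable (fun s : ℝ => s ^ (n - 1) * phi μ s) volume 0 b :=
      ((continuous_pow _).mul (phi_cont hsph)).intervalIntegrable _ _
    have hi2 : IntervalIntegrable (fun _ : ℝ => b ^ (n - 1) * Real.exp (-((n : ℝ) / 8)))
        volume 0 b := intervalIntegrable_const
    have hmono := intervalIntegral.integral_mono_on hb.le hi1 hi2 hptw
    rw [intervalIntegral.integral_const, smul_eq_mul, sub_zero] at hmono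
    exact hmono
  have hpowpos : (0 : ℝ) < b ^ (n - 1) := pow_pos hb _
  have habs : |phiD μ b| * b ^ (n - 1) ≤ (b * Real.exp (-((n : ℝ) / 8))) * b ^ (n - 1) := by
    have h1 : b ^ (n - 1) * phiD μ b = -I := hFTC.symm
    have h2 : |phiD μ b| * b ^ (n - 1) = |b ^ (n - 1) * phiD μ b| := by
      rw [abs_mul, abs_of_pos hpowpos, mul_comm]
    rw [h2, h1, abs_neg, abs_of_nonneg hInonneg]
    calc I ≤ b * (b ^ (n - 1) * Real.exp (-((n : ℝ) / 8))) := hIle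
      _ = (b * Real.exp (-((n : ℝ) / 8))) * b ^ (n - 1) := by ring
  have := le_of_mul_le_mul_right habs hpowpos
  rwa [hbdef] at this

lemma phi_global {s : ℝ} (hs : 0 ≤ s) :
    |phi μ s| ≤ Real.exp (-(s ^ 2 / (2 * (n : ℝ)))) + (n : ℝ) * Real.exp (-((n : ℝ) / 8)) := by
  have hN := nR_pos hinv hsph hn (μ := μ)
  set b : ℝ := (n : ℝ) / 2 with hbdef
  have hb : 0 < b := by rw [hbdef]; linarith
  by_cases hcase : s ≤ b
  · have hpos := phi_pos hinv hsph hn s ⟨hs, hcase⟩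
    have hup := phi_le_u hinv hsph hn s ⟨hs, hcase⟩
    rw [abs_of_pos hpos]
    have hnn : 0 ≤ (n : ℝ) * Real.exp (-((n : ℝ) / 8)) := by positivity
    linarith
  · push_neg at hcase
    have hE := energy hinv hsph hn hb hcase.le
    have hub : phi μ b ≤ Real.exp (-((n : ℝ) / 8)) := by
      have h := phi_le_u hinv hsph hn b (Set.mem_Icc.mpr ⟨hb.le, le_refl b⟩)
      rwa [hbdef, u_at_half hinv hsph hn (μ := μ)] at h
    have hposb : 0 < phi μ b := phi_pos hinv hsph hn b (Set.mem_Icc.mpr ⟨hb.le, le_refl b⟩)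
    have hDb := phiD_at_half hinv hsph hn (μ := μ)
    have hN2 : (2 : ℝ) ≤ (n : ℝ) := by exact_mod_cast hn
    have h1 : phi μ s ^ 2 ≤ ((n : ℝ) * Real.exp (-((n : ℝ) / 8))) ^ 2 := by
      have e1 : phi μ b ^ 2 ≤ Real.exp (-((n : ℝ) / 8)) ^ 2 := by
        apply pow_le_pow_left₀ hposb.le hub
      have e2 : phiD μ b ^ 2 ≤ (((n : ℝ) / 2) * Real.exp (-((n : ℝ) / 8))) ^ 2 := by
        rw [← sq_abs (phiD μ b)]
        apply pow_le_pow_left₀ (abs_nonneg _)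
        rw [← hbdef] at hDb ⊢
        exact hDb
      have hs2 : phi μ s ^ 2 ≤ phi μ b ^ 2 + phiD μ b ^ 2 :=
        le_trans (le_add_of_nonneg_right (sq_nonneg _)) hE
      have h3 : Real.exp (-((n : ℝ) / 8)) ^ 2
          ≤ 3 * ((n : ℝ) ^ 2 * Real.exp (-((n : ℝ) / 8)) ^ 2) / 4 := by
        have hco : (0 : ℝ) ≤ 3 * (n : ℝ) ^ 2 / 4 - 1 := by nlinarith
        nlinarith [mul_nonneg (sq_nonneg (Real.exp (-((n : ℝ) / 8)))) hco]
      have e2'' : phiD μ b ^ 2 ≤ (n : ℝ) ^ 2 * Real.exp (-((n : ℝ) / 8)) ^ 2 / 4 := by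
        nlinarith [e2]
      nlinarith [hs2, e1, e2'', h3]
    have h2 : |phi μ s| ≤ (n : ℝ) * Real.exp (-((n : ℝ) / 8)) := by
      have hnn : 0 ≤ (n : ℝ) * Real.exp (-((n : ℝ) / 8)) := by positivity
      rw [← Real.sqrt_sq_eq_abs]
      calc Real.sqrt (phi μ s ^ 2) ≤ Real.sqrt (((n : ℝ) * Real.exp (-((n : ℝ) / 8))) ^ 2) :=
            Real.sqrt_le_sqrt h1
        _ = (n : ℝ) * Real.exp (-((n : ℝ) / 8)) := Real.sqrt_sq hnn
    have := Real.exp_pos (-(s ^ 2 / (2 * (n : ℝ))))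
    linarith

end Bounds

section Swap
variable {Ω : Type} [MeasureSpace Ω] [IsProbabilityMeasure (ℙ : Measure Ω)]
variable {μ : Measure (EuclideanSpace ℝ (Fin n))} [IsProbabilityMeasure μ]

lemma swap_repr (X : Ω → EuclideanSpace ℝ (Fin n)) (hX : Measurable X)
    (hinv : ∀ T : EuclideanSpace ℝ (Fin n) ≃ₗᵢ[ℝ] EuclideanSpace ℝ (Fin n), μ.map T = μ)
    (t : ℝ) :
    typicalCharFn X μ t = ∫ ω, ((phi μ (|t| * ‖X ω‖) : ℝ) : ℂ) := by
  have hmeas : Measurable fun q : EuclideanSpace ℝ (Fin n) × Ω =>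
      Complex.exp (Complex.I * ((t * ⟪X q.2, q.1⟫ : ℝ) : ℂ)) := by
    have h1 : Measurable fun q : EuclideanSpace ℝ (Fin n) × Ω =>
        (X q.2, q.1) := (hX.comp measurable_snd).prodMk measurable_fst
    have h2 : Measurable fun q : EuclideanSpace ℝ (Fin n) × Ω => ⟪X q.2, q.1⟫ :=
      continuous_inner.measurable.comp h1
    exact Complex.continuous_exp.measurable.comp
      ((Complex.measurable_ofReal.comp (h2.const_mul t)).const_mul Complex.I)
  have hint : Integrable (Function.uncurry fun (θ : EuclideanSpace ℝ (Fin n)) (ω : Ω) =>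
      Complex.exp (Complex.I * ((t * ⟪X ω, θ⟫ : ℝ) : ℂ))) (μ.prod ℙ) := by
    refine (integrable_const (1 : ℝ)).mono' hmeas.aestronglyMeasurable ?_
    refine Filter.Eventually.of_forall fun q => ?_
    have : (Complex.I * ((t * ⟪X q.2, q.1⟫ : ℝ) : ℂ)).re = 0 := by simp
    rw [Function.uncurry]
    simp only [Complex.norm_exp, this, Real.exp_zero, Real.norm_eq_abs]
    norm_num
  have hswap := MeasureTheory.integral_integral_swap hint
  have hlhs : typicalCharFn X μ t = ∫ θ, ∫ ω,
      Complex.exp (Complex.I * ((t * ⟪X ω, θ⟫ : ℝ) : ℂ)) ∂ℙ ∂μ := rfl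
  rw [hlhs]
  refine Eq.trans hswap (integral_congr_ae (Filter.Eventually.of_forall fun ω => ?_))
  have h := exp_radial hinv (t • X ω)
  simp only [real_inner_smul_left] at h
  rw [norm_smul, Real.norm_eq_abs] at h
  exact h

end Swap

end Stmt15Aux

set_option maxHeartbeats 2000000 in
theorem stmt15 :
    ∀ p : ℝ, 1 ≤ p →
    ∃ c : ℝ, 0 < c ∧
      ∀ (n : ℕ), 2 ≤ n →
      ∀ (Ω : Type) [MeasureSpace Ω] [IsProbabilityMeasure (ℙ : Measure Ω)]
        (X : Ω → EuclideanSpace ℝ (Fin n)), Measurable X →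
      ∀ μ : Measure (EuclideanSpace ℝ (Fin n)), IsUniformOnSphere μ →
      (∫ ω, ‖X ω‖ ^ 2) = (n : ℝ) →
      (Integrable fun ω => |‖X ω‖ ^ 2 / (n : ℝ) - 1| ^ p) →
      (∀ t : ℝ,
        c * ‖typicalCharFn X μ t‖ ≤
          (1 + (Real.sqrt n * (∫ ω, |‖X ω‖ ^ 2 / (n : ℝ) - 1| ^ p) ^ p⁻¹) ^ p) /
            (n : ℝ) ^ (p / 2) + Real.exp (-(t ^ 2) / 4)) ∧
      (∀ T : ℝ, 0 < T →
        c / T * ∫ t in (0 : ℝ)..T, ‖typicalCharFn X μ t‖ ≤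
          (1 + (Real.sqrt n * (∫ ω, |‖X ω‖ ^ 2 / (n : ℝ) - 1| ^ p) ^ p⁻¹) ^ p) /
            (n : ℝ) ^ (p / 2) + 1 / T) := by
  intro p hp
  classical
  have hp0 : (0 : ℝ) < p := lt_of_lt_of_le one_pos hp
  set m : ℕ := ⌈p⌉₊ + 1 with hm
  set B : ℝ := (8 : ℝ) ^ m * (m.factorial : ℝ) with hB
  have hBpos : 0 < B := by positivity
  set K : ℝ := (2 : ℝ) ^ p + B + 1 with hK
  have h2p : (0 : ℝ) < (2 : ℝ) ^ p := Real.rpow_pos_of_pos two_pos p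
  have hKpos : 0 < K := by positivity
  have hK1 : 1 ≤ K := by
    rw [hK]; nlinarith
  have h2pK : (2 : ℝ) ^ p ≤ K := by rw [hK]; nlinarith
  have hBK : B ≤ K := by rw [hK]; nlinarith
  refine ⟨1 / (6 * K), by positivity, ?_⟩
  intro n hn Ω _ _ X hX μ hμ hEX hInt
  haveI : NeZero n := ⟨by omega⟩
  haveI hprob : IsProbabilityMeasure μ := hμ.1
  have hinv := hμ.2.2
  have hsph : ∀ᵐ θ ∂μ, ‖θ‖ = 1 := Stmt15Aux.ae_sphere hμ.2.1
  have hN2 : (2 : ℝ) ≤ (n : ℝ) := by exact_mod_cast hn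
  have hNpos : (0 : ℝ) < (n : ℝ) := by linarith
  have hM0 : 0 ≤ ∫ ω, |‖X ω‖ ^ 2 / (n : ℝ) - 1| ^ p := by
    apply integral_nonneg
    intro ω
    exact Real.rpow_nonneg (abs_nonneg _) p
  have hNp : (0 : ℝ) < (n : ℝ) ^ (p / 2) := Real.rpow_pos_of_pos hNpos _
  -- the RHS simplification
  have hRHS : (1 + (Real.sqrt (n : ℝ) * (∫ ω, |‖X ω‖ ^ 2 / (n : ℝ) - 1| ^ p) ^ p⁻¹) ^ p) /
      (n : ℝ) ^ (p / 2)
      = ((n : ℝ) ^ (p / 2))⁻¹ + ∫ ω, |‖X ω‖ ^ 2 / (n : ℝ) - 1| ^ p := by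
    have h1 : (Real.sqrt (n : ℝ) * (∫ ω, |‖X ω‖ ^ 2 / (n : ℝ) - 1| ^ p) ^ p⁻¹) ^ p
        = (n : ℝ) ^ (p / 2) * ∫ ω, |‖X ω‖ ^ 2 / (n : ℝ) - 1| ^ p := by
      rw [Real.mul_rpow (Real.sqrt_nonneg _) (Real.rpow_nonneg hM0 _)]
      congr 1
      · rw [Real.sqrt_eq_rpow, ← Real.rpow_mul hNpos.le]
        congr 1
        ring
      · rw [← Real.rpow_mul hM0, inv_mul_cancel₀ (ne_of_gt hp0), Real.rpow_one]
    rw [h1, add_div]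
    congr 1
    · rw [one_div]
    · rw [mul_comm, mul_div_assoc, div_self (ne_of_gt hNp), mul_one]
  -- bound of the dimensional term
  have hdim : (n : ℝ) * Real.exp (-((n : ℝ) / 8)) ≤ B * (((n : ℝ)) ^ (p / 2))⁻¹ := by
    have hexp8 : (0 : ℝ) ≤ (n : ℝ) / 8 := by linarith
    have hstep1 : (n : ℝ) ^ (p / 2) ≤ (n : ℝ) ^ (⌈p⌉₊ : ℝ) := by
      apply Real.rpow_le_rpow_of_exponent_le (by linarith)
      calc p / 2 ≤ p := by linarith
        _ ≤ (⌈p⌉₊ : ℝ) := Nat.le_ceil p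
    have hstep2 : (n : ℝ) ^ (p / 2) * (n : ℝ) ≤ (n : ℝ) ^ m := by
      calc (n : ℝ) ^ (p / 2) * (n : ℝ) ≤ (n : ℝ) ^ (⌈p⌉₊ : ℝ) * (n : ℝ) :=
            mul_le_mul_of_nonneg_right hstep1 (by linarith)
        _ = (n : ℝ) ^ (⌈p⌉₊ : ℕ) * (n : ℝ) := by rw [Real.rpow_natCast]
        _ = (n : ℝ) ^ m := by rw [hm, pow_succ]
    have hstep3 : (n : ℝ) ^ m ≤ 8 ^ m * (m.factorial : ℝ) * Real.exp ((n : ℝ) / 8) := by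
      have h1 : ((n : ℝ) / 8) ^ m / (m.factorial : ℝ)
          ≤ ∑ i ∈ Finset.range (m + 1), ((n : ℝ) / 8) ^ i / (i.factorial : ℝ) := by
        exact Finset.single_le_sum (f := fun i => ((n : ℝ) / 8) ^ i / (i.factorial : ℝ))
          (fun i _ => by positivity) (Finset.self_mem_range_succ m)
      have h2 := Real.sum_le_exp_of_nonneg hexp8 (m + 1)
      have h3 : ((n : ℝ) / 8) ^ m / (m.factorial : ℝ) ≤ Real.exp ((n : ℝ) / 8) :=
        le_trans h1 h2
      have h4 : ((n : ℝ) / 8) ^ m = (n : ℝ) ^ m / 8 ^ m := div_pow (n : ℝ) 8 m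
      rw [h4] at h3
      have h8pos : (0 : ℝ) < 8 ^ m := by positivity
      have hfacpos : (0 : ℝ) < (m.factorial : ℝ) := by positivity
      rw [div_div, div_le_iff₀ (by positivity)] at h3
      linarith [h3]
    have hfinal : (n : ℝ) ^ (p / 2) * ((n : ℝ) * Real.exp (-((n : ℝ) / 8))) ≤ B := by
      calc (n : ℝ) ^ (p / 2) * ((n : ℝ) * Real.exp (-((n : ℝ) / 8)))
          = ((n : ℝ) ^ (p / 2) * (n : ℝ)) * Real.exp (-((n : ℝ) / 8)) := by ring
        _ ≤ (n : ℝ) ^ m * Real.exp (-((n : ℝ) / 8)) :=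
            mul_le_mul_of_nonneg_right hstep2 (Real.exp_nonneg _)
        _ ≤ (8 ^ m * (m.factorial : ℝ) * Real.exp ((n : ℝ) / 8)) * Real.exp (-((n : ℝ) / 8)) :=
            mul_le_mul_of_nonneg_right hstep3 (Real.exp_nonneg _)
        _ = B := by
            rw [hB, mul_assoc, ← Real.exp_add]
            norm_num
    have heq : (n : ℝ) * Real.exp (-((n : ℝ) / 8))
        = ((n : ℝ) ^ (p / 2) * ((n : ℝ) * Real.exp (-((n : ℝ) / 8)))) * ((n : ℝ) ^ (p / 2))⁻¹ := by
      field_simp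
    rw [heq]
    exact mul_le_mul_of_nonneg_right hfinal (by positivity)
  -- the swap representation
  have hswap : ∀ t : ℝ, typicalCharFn X μ t
      = ∫ ω, ((Stmt15Aux.phi μ (|t| * ‖X ω‖) : ℝ) : ℂ) :=
    fun t => Stmt15Aux.swap_repr X hX hinv t
  -- main pointwise-in-t bound
  have hmain : ∀ t : ℝ, ‖typicalCharFn X μ t‖
      ≤ (2 : ℝ) ^ p * (∫ ω, |‖X ω‖ ^ 2 / (n : ℝ) - 1| ^ p)
        + (B * (((n : ℝ)) ^ (p / 2))⁻¹ + Real.exp (-(t ^ 2) / 4)) := by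
    intro t
    rw [hswap t]
    have hb1 : ‖∫ ω, ((Stmt15Aux.phi μ (|t| * ‖X ω‖) : ℝ) : ℂ)‖
        ≤ ∫ ω, |Stmt15Aux.phi μ (|t| * ‖X ω‖)| := by
      calc ‖∫ ω, ((Stmt15Aux.phi μ (|t| * ‖X ω‖) : ℝ) : ℂ)‖
          ≤ ∫ ω, ‖((Stmt15Aux.phi μ (|t| * ‖X ω‖) : ℝ) : ℂ)‖ := norm_integral_le_integral_norm _
        _ = ∫ ω, |Stmt15Aux.phi μ (|t| * ‖X ω‖)| := by
            refine integral_congr_ae (Filter.Eventually.of_forall fun ω => ?_)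
            show ‖((Stmt15Aux.phi μ (|t| * ‖X ω‖) : ℝ) : ℂ)‖ = |Stmt15Aux.phi μ (|t| * ‖X ω‖)|
            rw [Complex.norm_real, Real.norm_eq_abs]
    refine le_trans hb1 ?_
    have hptw : ∀ ω, |Stmt15Aux.phi μ (|t| * ‖X ω‖)|
        ≤ (2 : ℝ) ^ p * |‖X ω‖ ^ 2 / (n : ℝ) - 1| ^ p
          + (B * (((n : ℝ)) ^ (p / 2))⁻¹ + Real.exp (-(t ^ 2) / 4)) := by
      intro ω
      have hR0 : 0 ≤ ‖X ω‖ := norm_nonneg _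
      have hexp4 : (0 : ℝ) ≤ Real.exp (-(t ^ 2) / 4) := (Real.exp_pos _).le
      have hBN : (0 : ℝ) ≤ B * (((n : ℝ)) ^ (p / 2))⁻¹ := by positivity
      by_cases hc : ‖X ω‖ ^ 2 < (n : ℝ) / 2
      · have h1 : |Stmt15Aux.phi μ (|t| * ‖X ω‖)| ≤ 1 := Stmt15Aux.abs_phi_le_one' _
        have hlt : ‖X ω‖ ^ 2 / (n : ℝ) < 1 / 2 := by
          rw [div_lt_iff₀ hNpos]
          linarith
        have h2 : (1 : ℝ) / 2 ≤ |‖X ω‖ ^ 2 / (n : ℝ) - 1| := by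
          calc (1 : ℝ) / 2 ≤ -(‖X ω‖ ^ 2 / (n : ℝ) - 1) := by linarith
            _ ≤ |‖X ω‖ ^ 2 / (n : ℝ) - 1| := neg_le_abs _
        have h3 : (1 : ℝ) ≤ (2 : ℝ) ^ p * |‖X ω‖ ^ 2 / (n : ℝ) - 1| ^ p := by
          calc (1 : ℝ) = (1 : ℝ) ^ p := (Real.one_rpow p).symm
            _ ≤ (2 * |‖X ω‖ ^ 2 / (n : ℝ) - 1|) ^ p :=
                Real.rpow_le_rpow (by norm_num) (by linarith) hp0.le
            _ = (2 : ℝ) ^ p * |‖X ω‖ ^ 2 / (n : ℝ) - 1| ^ p :=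
                Real.mul_rpow (by norm_num) (abs_nonneg _)
        linarith
      · push_neg at hc
        have hs0 : 0 ≤ |t| * ‖X ω‖ := by positivity
        have hg := Stmt15Aux.phi_global hinv hsph hn (s := |t| * ‖X ω‖) hs0
        have hcmp : Real.exp (-((|t| * ‖X ω‖) ^ 2 / (2 * (n : ℝ))))
            ≤ Real.exp (-(t ^ 2) / 4) := by
          apply Real.exp_le_exp.mpr
          have hsq : (|t| * ‖X ω‖) ^ 2 = t ^ 2 * ‖X ω‖ ^ 2 := by
            rw [mul_pow, sq_abs]
          rw [hsq]
          have ht2 : (0 : ℝ) ≤ t ^ 2 := sq_nonneg t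
          rw [neg_div, neg_le_neg_iff, div_le_div_iff₀ (by norm_num) (by positivity)]
          nlinarith [mul_le_mul_of_nonneg_left hc ht2]
        have h6 : (0 : ℝ) ≤ (2 : ℝ) ^ p * |‖X ω‖ ^ 2 / (n : ℝ) - 1| ^ p := by
          positivity
        calc |Stmt15Aux.phi μ (|t| * ‖X ω‖)|
            ≤ Real.exp (-((|t| * ‖X ω‖) ^ 2 / (2 * (n : ℝ))))
              + (n : ℝ) * Real.exp (-((n : ℝ) / 8)) := hg
          _ ≤ Real.exp (-(t ^ 2) / 4) + B * (((n : ℝ)) ^ (p / 2))⁻¹ := add_le_add hcmp hdim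
          _ ≤ (2 : ℝ) ^ p * |‖X ω‖ ^ 2 / (n : ℝ) - 1| ^ p
              + (B * (((n : ℝ)) ^ (p / 2))⁻¹ + Real.exp (-(t ^ 2) / 4)) := by linarith
    have hmeas2 : Measurable fun ω => |t| * ‖X ω‖ := (hX.norm).const_mul |t|
    have hfi : Integrable (fun ω => |Stmt15Aux.phi μ (|t| * ‖X ω‖)|) ℙ := by
      refine (integrable_const (1 : ℝ)).mono'
        (((Stmt15Aux.phi_cont hsph).measurable.comp hmeas2).abs.aestronglyMeasurable) ?_
      refine Filter.Eventually.of_forall fun ω => ?_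
      rw [Real.norm_eq_abs, abs_abs]
      exact Stmt15Aux.abs_phi_le_one' _
    have hgi : Integrable (fun ω => (2 : ℝ) ^ p * |‖X ω‖ ^ 2 / (n : ℝ) - 1| ^ p
        + (B * (((n : ℝ)) ^ (p / 2))⁻¹ + Real.exp (-(t ^ 2) / 4))) ℙ :=
      (hInt.const_mul _).add (integrable_const _)
    have hmono := integral_mono hfi hgi hptw
    refine le_trans hmono ?_
    rw [integral_add (hInt.const_mul _) (integrable_const _), integral_const_mul,
      integral_const, probReal_univ]
    simp
  -- Claim 1
  constructor
  · intro t
    rw [hRHS]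
    have h := hmain t
    have hfn : 0 ≤ ‖typicalCharFn X μ t‖ := norm_nonneg _
    have hKM : (2 : ℝ) ^ p * (∫ ω, |‖X ω‖ ^ 2 / (n : ℝ) - 1| ^ p)
        ≤ K * (∫ ω, |‖X ω‖ ^ 2 / (n : ℝ) - 1| ^ p) :=
      mul_le_mul_of_nonneg_right h2pK hM0
    have hKB : B * (((n : ℝ)) ^ (p / 2))⁻¹ ≤ K * (((n : ℝ)) ^ (p / 2))⁻¹ :=
      mul_le_mul_of_nonneg_right hBK (by positivity)
    have hKe : Real.exp (-(t ^ 2) / 4) ≤ K * Real.exp (-(t ^ 2) / 4) :=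
      le_mul_of_one_le_left (Real.exp_pos _).le hK1
    have h2 : ‖typicalCharFn X μ t‖ ≤ K * ((((n : ℝ)) ^ (p / 2))⁻¹
        + (∫ ω, |‖X ω‖ ^ 2 / (n : ℝ) - 1| ^ p) + Real.exp (-(t ^ 2) / 4)) := by
      have hexpand : K * ((((n : ℝ)) ^ (p / 2))⁻¹
          + (∫ ω, |‖X ω‖ ^ 2 / (n : ℝ) - 1| ^ p) + Real.exp (-(t ^ 2) / 4))
          = K * (((n : ℝ)) ^ (p / 2))⁻¹ + K * (∫ ω, |‖X ω‖ ^ 2 / (n : ℝ) - 1| ^ p)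
            + K * Real.exp (-(t ^ 2) / 4) := by ring
      rw [hexpand]
      linarith
    have hc6 : 1 / (6 * K) * ‖typicalCharFn X μ t‖
        ≤ 1 / (6 * K) * (K * ((((n : ℝ)) ^ (p / 2))⁻¹
          + (∫ ω, |‖X ω‖ ^ 2 / (n : ℝ) - 1| ^ p) + Real.exp (-(t ^ 2) / 4))) :=
      mul_le_mul_of_nonneg_left h2 (by positivity)
    have heval : 1 / (6 * K) * (K * ((((n : ℝ)) ^ (p / 2))⁻¹
        + (∫ ω, |‖X ω‖ ^ 2 / (n : ℝ) - 1| ^ p) + Real.exp (-(t ^ 2) / 4)))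
        = ((((n : ℝ)) ^ (p / 2))⁻¹ + (∫ ω, |‖X ω‖ ^ 2 / (n : ℝ) - 1| ^ p)
          + Real.exp (-(t ^ 2) / 4)) / 6 := by
      field_simp
    rw [heval] at hc6
    have hexp4 : (0 : ℝ) ≤ Real.exp (-(t ^ 2) / 4) := (Real.exp_pos _).le
    have hinvn : (0 : ℝ) ≤ (((n : ℝ)) ^ (p / 2))⁻¹ := by positivity
    linarith
  -- Claim 2
  · intro T hT
    rw [hRHS]
    have hcontf : Continuous fun t : ℝ => ‖typicalCharFn X μ t‖ := by
      have hfe : (fun t : ℝ => ‖typicalCharFn X μ t‖)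
          = fun t => ‖∫ ω, ((Stmt15Aux.phi μ (|t| * ‖X ω‖) : ℝ) : ℂ)‖ :=
        funext fun t => by rw [hswap t]
      rw [hfe]
      apply Continuous.norm
      apply continuous_of_dominated (bound := fun _ : Ω => (1 : ℝ))
      · intro t
        exact (Complex.continuous_ofReal.measurable.comp
          ((Stmt15Aux.phi_cont hsph).measurable.comp ((hX.norm).const_mul |t|))).aestronglyMeasurable
      · intro t
        refine Filter.Eventually.of_forall fun ω => ?_
        rw [Complex.norm_real, Real.norm_eq_abs]
        exact Stmt15Aux.abs_phi_le_one' _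
      · exact integrable_const 1
      · refine Filter.Eventually.of_forall fun ω => ?_
        exact Complex.continuous_ofReal.comp ((Stmt15Aux.phi_cont hsph).comp
          (continuous_abs.mul continuous_const))
    have hfInt : IntervalIntegrable (fun t => ‖typicalCharFn X μ t‖) volume 0 T :=
      hcontf.intervalIntegrable _ _
    have hexpcont : Continuous fun t : ℝ => Real.exp (-(t ^ 2) / 4) :=
      Real.continuous_exp.comp ((continuous_pow 2).neg.div_const 4)
    have hgInt : IntervalIntegrable (fun t : ℝ => K * ((((n : ℝ)) ^ (p / 2))⁻¹
        + (∫ ω, |‖X ω‖ ^ 2 / (n : ℝ) - 1| ^ p)) + K * Real.exp (-(t ^ 2) / 4)) volume 0 T :=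
      (continuous_const.add (continuous_const.mul hexpcont)).intervalIntegrable _ _
    have hpt : ∀ t ∈ Set.Icc (0 : ℝ) T, ‖typicalCharFn X μ t‖
        ≤ K * ((((n : ℝ)) ^ (p / 2))⁻¹ + (∫ ω, |‖X ω‖ ^ 2 / (n : ℝ) - 1| ^ p))
          + K * Real.exp (-(t ^ 2) / 4) := by
      intro t _
      have h := hmain t
      have hKM : (2 : ℝ) ^ p * (∫ ω, |‖X ω‖ ^ 2 / (n : ℝ) - 1| ^ p)
          ≤ K * (∫ ω, |‖X ω‖ ^ 2 / (n : ℝ) - 1| ^ p) :=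
        mul_le_mul_of_nonneg_right h2pK hM0
      have hKB : B * (((n : ℝ)) ^ (p / 2))⁻¹ ≤ K * (((n : ℝ)) ^ (p / 2))⁻¹ :=
        mul_le_mul_of_nonneg_right hBK (by positivity)
      have hKe : Real.exp (-(t ^ 2) / 4) ≤ K * Real.exp (-(t ^ 2) / 4) :=
        le_mul_of_one_le_left (Real.exp_pos _).le hK1
      have hexpand : K * ((((n : ℝ)) ^ (p / 2))⁻¹
          + (∫ ω, |‖X ω‖ ^ 2 / (n : ℝ) - 1| ^ p))
          = K * (((n : ℝ)) ^ (p / 2))⁻¹ + K * (∫ ω, |‖X ω‖ ^ 2 / (n : ℝ) - 1| ^ p) := by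
        ring
      rw [hexpand]
      linarith
    have hle1 := intervalIntegral.integral_mono_on hT.le hfInt hgInt hpt
    have hsplit : (∫ t in (0 : ℝ)..T, (K * ((((n : ℝ)) ^ (p / 2))⁻¹
        + (∫ ω, |‖X ω‖ ^ 2 / (n : ℝ) - 1| ^ p)) + K * Real.exp (-(t ^ 2) / 4)))
        = K * ((((n : ℝ)) ^ (p / 2))⁻¹ + (∫ ω, |‖X ω‖ ^ 2 / (n : ℝ) - 1| ^ p)) * T
          + K * ∫ t in (0 : ℝ)..T, Real.exp (-(t ^ 2) / 4) := by
      rw [intervalIntegral.integral_add (g := fun t => K * Real.exp (-(t ^ 2) / 4)) intervalIntegrable_const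
        ((continuous_const.mul hexpcont).intervalIntegrable _ _),
        intervalIntegral.integral_const, intervalIntegral.integral_const_mul]
      simp [smul_eq_mul]
      ring
    have hexpo : (∫ t in (0 : ℝ)..T, Real.exp (-(t ^ 2) / 4)) ≤ 6 := by
      have hptw2 : ∀ t ∈ Set.Icc (0 : ℝ) T, Real.exp (-(t ^ 2) / 4)
          ≤ Real.exp (1 - t / 2) := by
        intro t _
        apply Real.exp_le_exp.mpr
        nlinarith [sq_nonneg (t - 1)]
      have hc2 : Continuous fun t : ℝ => Real.exp (1 - t / 2) :=
        Real.continuous_exp.comp (continuous_const.sub (continuous_id.div_const 2))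
      have h1 := intervalIntegral.integral_mono_on (μ := volume) hT.le
        (hexpcont.intervalIntegrable _ _) (hc2.intervalIntegrable _ _) hptw2
      have hanti : ∀ t ∈ Set.uIcc (0 : ℝ) T,
          HasDerivAt (fun t : ℝ => -2 * Real.exp (1 - t / 2)) (Real.exp (1 - t / 2)) t := by
        intro t _
        have hin : HasDerivAt (fun t : ℝ => 1 - t / 2) (-(1 / 2)) t := by
          simpa using ((hasDerivAt_id t).div_const 2).const_sub 1
        have h2 := (hin.exp).const_mul (-2 : ℝ)
        refine h2.congr_deriv ?_
        ring
      have hFTC2 := intervalIntegral.integral_eq_sub_of_hasDerivAt hanti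
        (hc2.intervalIntegrable _ _)
      rw [hFTC2] at h1
      have he3 : Real.exp 1 ≤ 3 := by
        have h9 := Real.exp_one_lt_d9
        linarith
      have hTeval : -2 * Real.exp (1 - T / 2) - (-2) * Real.exp (1 - 0 / 2) ≤ 6 := by
        have hp1 := Real.exp_pos (1 - T / 2)
        norm_num
        nlinarith
      nlinarith [h1, hTeval]
    have hS0 : (0 : ℝ) ≤ (((n : ℝ)) ^ (p / 2))⁻¹ + ∫ ω, |‖X ω‖ ^ 2 / (n : ℝ) - 1| ^ p :=
      add_nonneg (by positivity) hM0
    have hchain : 1 / (6 * K) / T * (∫ t in (0 : ℝ)..T, ‖typicalCharFn X μ t‖)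
        ≤ 1 / (6 * K) / T * (K * ((((n : ℝ)) ^ (p / 2))⁻¹
          + (∫ ω, |‖X ω‖ ^ 2 / (n : ℝ) - 1| ^ p)) * T + K * 6) := by
      apply mul_le_mul_of_nonneg_left _ (by positivity)
      calc (∫ t in (0 : ℝ)..T, ‖typicalCharFn X μ t‖)
          ≤ (∫ t in (0 : ℝ)..T, (K * ((((n : ℝ)) ^ (p / 2))⁻¹
            + (∫ ω, |‖X ω‖ ^ 2 / (n : ℝ) - 1| ^ p)) + K * Real.exp (-(t ^ 2) / 4))) := hle1
        _ = K * ((((n : ℝ)) ^ (p / 2))⁻¹ + (∫ ω, |‖X ω‖ ^ 2 / (n : ℝ) - 1| ^ p)) * T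
            + K * ∫ t in (0 : ℝ)..T, Real.exp (-(t ^ 2) / 4) := hsplit
        _ ≤ K * ((((n : ℝ)) ^ (p / 2))⁻¹ + (∫ ω, |‖X ω‖ ^ 2 / (n : ℝ) - 1| ^ p)) * T
            + K * 6 := by
            have := mul_le_mul_of_nonneg_left hexpo hKpos.le
            linarith
    have heval : 1 / (6 * K) / T * (K * ((((n : ℝ)) ^ (p / 2))⁻¹
        + (∫ ω, |‖X ω‖ ^ 2 / (n : ℝ) - 1| ^ p)) * T + K * 6)
        = ((((n : ℝ)) ^ (p / 2))⁻¹ + (∫ ω, |‖X ω‖ ^ 2 / (n : ℝ) - 1| ^ p)) / 6 + 1 / T := by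
      field_simp
    rw [heval] at hchain
    have h1T : (0 : ℝ) < 1 / T := by positivity
    linarith
end
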